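/- arXiv:1106.4361 — 4 statements merged into one kernel-verified Lean document; each statement's English description precedes it below -/
import Mathlib

section
/- Let k be a positive integer, Λ a row-finite k-graph without sources, R a commutative ring with 1, and (P,S) a Kumjian-Pask Λ-family in an R-algebra A. Then for all λ, μ ∈ Λ and every q ∈ ℕ^k with q ≥ d(λ) ∨ d(μ) (pointwise maximum), S_{λ*}S_μ = Σ S_α S_{β*}, where the sum is over all pairs (α, β) with α ∈ s(λ)Λ, β ∈ s(μ)Λ, d(λα) = q and λα = μβ. -/
namespace KP

/-- A `k`-graph: a nonempty countable small category `Λ` together with a degree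
functor `d : Λ → ℕ^k` satisfying the unique factorization property.  Objects
(vertices) are identified with identity morphisms via `ident`.  The composition
`comp l m` is only meaningful when `s l = r m`. -/
structure KGraph (k : ℕ) where
  V : Type
  E : Type
  nonemptyV : Nonempty V
  countableE : Countable E
  r : E → V
  s : E → V
  d : E → Fin k → ℕ
  ident : V → E
  comp : E → E → E
  r_ident : ∀ v, r (ident v) = v
  s_ident : ∀ v, s (ident v) = v
  d_ident : ∀ v, d (ident v) = 0
  r_comp : ∀ ⦃l m : E⦄, s l = r m → r (comp l m) = r l
  s_comp : ∀ ⦃l m : E⦄, s l = r m → s (comp l m) = s m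
  d_comp : ∀ ⦃l m : E⦄, s l = r m → d (comp l m) = d l + d m
  comp_assoc : ∀ ⦃l m n : E⦄, s l = r m → s m = r n →
    comp (comp l m) n = comp l (comp m n)
  ident_comp : ∀ l : E, comp (ident (r l)) l = l
  comp_ident : ∀ l : E, comp l (ident (s l)) = l
  eq_ident_of_d_eq_zero : ∀ l : E, d l = 0 → l = ident (r l)
  factor : ∀ (l : E) (m n : Fin k → ℕ), d l = m + n →
    ∃! p : E × E, d p.1 = m ∧ d p.2 = n ∧ s p.1 = r p.2 ∧ comp p.1 p.2 = l

namespace KGraph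

variable {k : ℕ}

/-- `Λ` is row-finite if every `vΛ^n` is finite. -/
def RowFinite (Λ : KGraph k) : Prop :=
  ∀ (v : Λ.V) (n : Fin k → ℕ), {l : Λ.E | Λ.r l = v ∧ Λ.d l = n}.Finite

/-- `Λ` has no sources if every `vΛ^n` is nonempty. -/
def NoSources (Λ : KGraph k) : Prop :=
  ∀ (v : Λ.V) (n : Fin k → ℕ), ∃ l : Λ.E, Λ.r l = v ∧ Λ.d l = n

/-- `H ⊆ Λ^0` is hereditary if `r(l) ∈ H` implies `s(l) ∈ H`. -/
def HereditarySet (Λ : KGraph k) (H : Set Λ.V) : Prop :=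
  ∀ l : Λ.E, Λ.r l ∈ H → Λ.s l ∈ H

/-- `H ⊆ Λ^0` is saturated if `s(vΛ^n) ⊆ H` implies `v ∈ H`. -/
def SaturatedSet (Λ : KGraph k) (H : Set Λ.V) : Prop :=
  ∀ (v : Λ.V) (n : Fin k → ℕ),
    (∀ l : Λ.E, Λ.r l = v → Λ.d l = n → Λ.s l ∈ H) → v ∈ H

open Classical in
/-- The segment `l(p,q)` of a path `l`: the unique middle factor in a
factorization `l = l'l''l'''` with `d l' = p` and `d l'' = q - p` (when `p ≤ q ≤ d l`). -/
noncomputable def seg (Λ : KGraph k) (l : Λ.E) (p q : Fin k → ℕ) : Λ.E :=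
  if h : ∃ t : Λ.E × Λ.E × Λ.E, Λ.d t.1 = p ∧ Λ.d t.2.1 = q - p ∧
      Λ.s t.1 = Λ.r t.2.1 ∧ Λ.s t.2.1 = Λ.r t.2.2 ∧
      Λ.comp t.1 (Λ.comp t.2.1 t.2.2) = l
  then (Classical.choose h).2.1 else l

/-- Aperiodicity in the finite-path formulation of Robertson and Sims. -/
def Aperiodic (Λ : KGraph k) : Prop :=
  ∀ (v : Λ.V) (m n : Fin k → ℕ), m ≠ n →
    ∃ l : Λ.E, Λ.r l = v ∧ m ⊔ n ≤ Λ.d l ∧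
      Λ.seg l m (m + Λ.d l - m ⊔ n) ≠ Λ.seg l n (n + Λ.d l - m ⊔ n)

end KGraph

/-- An infinite path in `Λ`: a degree-preserving functor `x : Ω_k → Λ`,
recorded by its segments `x.f p q = x(p,q)` for `p ≤ q`. -/
structure InfPath {k : ℕ} (Λ : KGraph k) where
  f : (Fin k → ℕ) → (Fin k → ℕ) → Λ.E
  deg : ∀ p q : Fin k → ℕ, p ≤ q → Λ.d (f p q) = q - p
  compat : ∀ p q u : Fin k → ℕ, p ≤ q → q ≤ u → Λ.s (f p q) = Λ.r (f q u)
  comp_f : ∀ p q u : Fin k → ℕ, p ≤ q → q ≤ u → Λ.comp (f p q) (f q u) = f p u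

/-- The vertex `x(n)` of an infinite path. -/
def InfPath.vtx {k : ℕ} {Λ : KGraph k} (x : InfPath Λ) (n : Fin k → ℕ) : Λ.V :=
  Λ.r (x.f n n)

/-- `Λ` is cofinal if for every infinite path `x` and vertex `v` there is `n`
with `vΛx(n)` nonempty. -/
def KGraph.Cofinal {k : ℕ} (Λ : KGraph k) : Prop :=
  ∀ (x : InfPath Λ) (v : Λ.V), ∃ (n : Fin k → ℕ) (l : Λ.E),
    Λ.r l = v ∧ Λ.s l = x.vtx n

/-- A Kumjian-Pask `Λ`-family in a ring `A`.  `P v = P_v`, `S l = S_l` and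
`S' l = S_{l*}`; by convention `S` and `S'` are extended to vertices (paths of
degree `0`) by `S_v = S_{v*} = P_v`. -/
structure KPFamily {k : ℕ} (Λ : KGraph k) (A : Type) [Ring A] where
  P : Λ.V → A
  S : Λ.E → A
  S' : Λ.E → A
  S_ident : ∀ v, S (Λ.ident v) = P v
  S'_ident : ∀ v, S' (Λ.ident v) = P v
  idem : ∀ v, P v * P v = P v
  orth : ∀ v w, v ≠ w → P v * P w = 0
  mul_S : ∀ ⦃l m : Λ.E⦄, Λ.d l ≠ 0 → Λ.d m ≠ 0 → Λ.s l = Λ.r m →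
    S l * S m = S (Λ.comp l m)
  mul_S' : ∀ ⦃l m : Λ.E⦄, Λ.d l ≠ 0 → Λ.d m ≠ 0 → Λ.s l = Λ.r m →
    S' m * S' l = S' (Λ.comp l m)
  P_mul_S : ∀ l : Λ.E, Λ.d l ≠ 0 → P (Λ.r l) * S l = S l
  S_mul_P : ∀ l : Λ.E, Λ.d l ≠ 0 → S l * P (Λ.s l) = S l
  P_mul_S' : ∀ l : Λ.E, Λ.d l ≠ 0 → P (Λ.s l) * S' l = S' l
  S'_mul_P : ∀ l : Λ.E, Λ.d l ≠ 0 → S' l * P (Λ.r l) = S' l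
  KP3_eq : ∀ l : Λ.E, Λ.d l ≠ 0 → S' l * S l = P (Λ.s l)
  KP3_ne : ∀ l m : Λ.E, Λ.d l ≠ 0 → Λ.d l = Λ.d m → l ≠ m → S' l * S m = 0
  KP4 : ∀ (v : Λ.V) (n : Fin k → ℕ), n ≠ 0 → ∀ F : Finset Λ.E,
    (∀ l : Λ.E, l ∈ F ↔ Λ.r l = v ∧ Λ.d l = n) →
    P v = ∑ l ∈ F, S l * S' l

/-- The Kumjian-Pask algebra of `Λ` with coefficients in `R`: an `R`-algebra
`A` together with a generating Kumjian-Pask family `(p,s)` which is universal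
for Kumjian-Pask `Λ`-families, carries a `ℤ^k`-grading with the prescribed
homogeneous components, and in which `r • p_v ≠ 0` for `r ≠ 0`. -/
structure KPAlgebra {k : ℕ} (Λ : KGraph k) (R : Type) [CommRing R]
    (A : Type) [Ring A] [Algebra R A] where
  fam : KPFamily Λ A
  universal : ∀ (B : Type) [Ring B] [Algebra R B] (QT : KPFamily Λ B),
    ∃! φ : A →ₐ[R] B,
      (∀ v, φ (fam.P v) = QT.P v) ∧
      (∀ l, Λ.d l ≠ 0 → φ (fam.S l) = QT.S l) ∧
      (∀ l, Λ.d l ≠ 0 → φ (fam.S' l) = QT.S' l)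
  grading : (Fin k → ℤ) → AddSubgroup A
  grading_mul : ∀ (m n : Fin k → ℤ), ∀ a ∈ grading m, ∀ b ∈ grading n,
    a * b ∈ grading (m + n)
  grading_internal : DirectSum.IsInternal grading
  grading_eq : ∀ n : Fin k → ℤ, (grading n : Set A) =
    ↑(Submodule.span R {x : A | ∃ l m : Λ.E,
      (fun i => (Λ.d l i : ℤ) - (Λ.d m i : ℤ)) = n ∧ x = fam.S l * fam.S' m})
  smul_P_ne_zero : ∀ (v : Λ.V) (c : R), c ≠ 0 → c • fam.P v ≠ 0

/-- A `G`-grading on a ring `A`: additive subgroups with `A_g A_h ⊆ A_{g+h}`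
such that `A` is their internal direct sum. -/
def IsGrading {G A : Type} [AddCommGroup G] [DecidableEq G] [Ring A]
    (gr : G → AddSubgroup A) : Prop :=
  (∀ g h : G, ∀ a ∈ gr g, ∀ b ∈ gr h, a * b ∈ gr (g + h)) ∧
  DirectSum.IsInternal gr

/-- An ideal `I` is graded when every element of `I` is a sum of homogeneous
elements of `I`, i.e. `I = Σ_g (I ∩ A_g)`. -/
def IsGradedIdeal {G A : Type} [Ring A] (gr : G → AddSubgroup A)
    (I : TwoSidedIdeal A) : Prop :=
  ∀ x ∈ I, x ∈ AddSubgroup.closure {y : A | y ∈ I ∧ ∃ g : G, y ∈ gr g}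

/-- An ideal `I` of `KP_R(Λ)` is basic if `c • p_v ∈ I` with `c ≠ 0` implies `p_v ∈ I`. -/
def IsBasic {k : ℕ} {Λ : KGraph k} {R : Type} [CommRing R]
    {A : Type} [Ring A] [Algebra R A] (KP : KPAlgebra Λ R A)
    (I : TwoSidedIdeal A) : Prop :=
  ∀ (c : R) (v : Λ.V), c ≠ 0 → c • KP.fam.P v ∈ I → KP.fam.P v ∈ I

/-- An ideal is idempotent if it is spanned by products `a * b` with `a, b ∈ I`. -/
def IsIdempotentIdeal {A : Type} [Ring A] (I : TwoSidedIdeal A) : Prop :=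
  (I : Set A) ⊆ ↑(AddSubgroup.closure {x : A | ∃ a ∈ I, ∃ b ∈ I, x = a * b})

/-- `RestrCompat Λ H Λ' eV eE` asserts that `Λ'` is (a realization of) the
subgraph `Λ∖H = (Λ^0∖H, {l ∈ Λ : s(l) ∉ H}, r, s)` with the restricted
structure maps, the identifications being given by the equivalences `eV`, `eE`. -/
def RestrCompat {k : ℕ} (Λ : KGraph k) (H : Set Λ.V) (Λ' : KGraph k)
    (eV : Λ'.V ≃ {v : Λ.V // v ∉ H}) (eE : Λ'.E ≃ {l : Λ.E // Λ.s l ∉ H}) : Prop :=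
  (∀ l : Λ'.E, (eV (Λ'.r l)).1 = Λ.r (eE l).1) ∧
  (∀ l : Λ'.E, (eV (Λ'.s l)).1 = Λ.s (eE l).1) ∧
  (∀ l : Λ'.E, Λ'.d l = Λ.d (eE l).1) ∧
  (∀ v : Λ'.V, (eE (Λ'.ident v)).1 = Λ.ident (eV v).1) ∧
  (∀ l m : Λ'.E, Λ'.s l = Λ'.r m →
    (eE (Λ'.comp l m)).1 = Λ.comp (eE l).1 (eE m).1)

/-- `Ind M`: the ideal of `KP_R(Λ)` induced by a set (ideal) `M` of coefficients,
`Ind M = span_R {c • s_a s_{b*} : c ∈ M, a b ∈ Λ}`. -/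
def IndSpan {k : ℕ} {Λ : KGraph k} {R : Type} [CommRing R]
    {A : Type} [Ring A] [Algebra R A] (KP : KPAlgebra Λ R A) (M : Set R) :
    Submodule R A :=
  Submodule.span R {x : A | ∃ c ∈ M, ∃ a b : Λ.E, x = c • (KP.fam.S a * KP.fam.S' b)}

/-- `Res I = {c ∈ R : c • p_v ∈ I for all v ∈ Λ^0}`. -/
def ResSet {k : ℕ} {Λ : KGraph k} {R : Type} [CommRing R]
    {A : Type} [Ring A] [Algebra R A] (KP : KPAlgebra Λ R A) (I : Set A) : Set R :=
  {c : R | ∀ v : Λ.V, c • KP.fam.P v ∈ I}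


section Helpers

variable {k : ℕ} {Λ : KGraph k} {A : Type} [Ring A]

lemma P_mul_S_gen (QT : KPFamily Λ A) (m : Λ.E) :
    QT.P (Λ.r m) * QT.S m = QT.S m := by
  by_cases h : Λ.d m = 0
  · have hm : m = Λ.ident (Λ.r m) := Λ.eq_ident_of_d_eq_zero m h
    rw [hm, Λ.r_ident, QT.S_ident]; exact QT.idem _
  · exact QT.P_mul_S m h

lemma S_mul_P_gen (QT : KPFamily Λ A) (m : Λ.E) :
    QT.S m * QT.P (Λ.s m) = QT.S m := by
  by_cases h : Λ.d m = 0
  · have hm : m = Λ.ident (Λ.r m) := Λ.eq_ident_of_d_eq_zero m h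
    rw [hm, Λ.s_ident, QT.S_ident]; exact QT.idem _
  · exact QT.S_mul_P m h

lemma P_mul_S'_gen (QT : KPFamily Λ A) (m : Λ.E) :
    QT.P (Λ.s m) * QT.S' m = QT.S' m := by
  by_cases h : Λ.d m = 0
  · have hm : m = Λ.ident (Λ.r m) := Λ.eq_ident_of_d_eq_zero m h
    rw [hm, Λ.s_ident, QT.S'_ident]; exact QT.idem _
  · exact QT.P_mul_S' m h

lemma S'_mul_P_gen (QT : KPFamily Λ A) (m : Λ.E) :
    QT.S' m * QT.P (Λ.r m) = QT.S' m := by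
  by_cases h : Λ.d m = 0
  · have hm : m = Λ.ident (Λ.r m) := Λ.eq_ident_of_d_eq_zero m h
    rw [hm, Λ.r_ident, QT.S'_ident]; exact QT.idem _
  · exact QT.S'_mul_P m h

lemma mul_S_gen (QT : KPFamily Λ A) {l m : Λ.E} (h : Λ.s l = Λ.r m) :
    QT.S l * QT.S m = QT.S (Λ.comp l m) := by
  by_cases hl : Λ.d l = 0
  · have hl' : l = Λ.ident (Λ.r l) := Λ.eq_ident_of_d_eq_zero l hl
    have hsl : Λ.s l = Λ.r l := by rw [hl', Λ.s_ident, Λ.r_ident]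
    have hr : Λ.r l = Λ.r m := by rw [← hsl]; exact h
    have hc : Λ.comp l m = m := by rw [hl', hr]; exact Λ.ident_comp m
    rw [hc, hl', QT.S_ident, hr]; exact P_mul_S_gen QT m
  · by_cases hm : Λ.d m = 0
    · have hm' : m = Λ.ident (Λ.r m) := Λ.eq_ident_of_d_eq_zero m hm
      have hc : Λ.comp l m = l := by rw [hm', ← h]; exact Λ.comp_ident l
      rw [hc, hm', QT.S_ident, ← h]; exact QT.S_mul_P l hl
    · exact QT.mul_S hl hm h

lemma mul_S'_gen (QT : KPFamily Λ A) {l m : Λ.E} (h : Λ.s l = Λ.r m) :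
    QT.S' m * QT.S' l = QT.S' (Λ.comp l m) := by
  by_cases hl : Λ.d l = 0
  · have hl' : l = Λ.ident (Λ.r l) := Λ.eq_ident_of_d_eq_zero l hl
    have hsl : Λ.s l = Λ.r l := by rw [hl', Λ.s_ident, Λ.r_ident]
    have hr : Λ.r l = Λ.r m := by rw [← hsl]; exact h
    have hc : Λ.comp l m = m := by rw [hl', hr]; exact Λ.ident_comp m
    rw [hc, hl', QT.S'_ident, hr]; exact S'_mul_P_gen QT m
  · by_cases hm : Λ.d m = 0
    · have hm' : m = Λ.ident (Λ.r m) := Λ.eq_ident_of_d_eq_zero m hm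
      have hc : Λ.comp l m = l := by rw [hm', ← h]; exact Λ.comp_ident l
      rw [hc, hm', QT.S'_ident, ← h]; exact QT.P_mul_S' l hl
    · exact QT.mul_S' hl hm h

open Classical in
lemma KP3_gen (QT : KPFamily Λ A) {l m : Λ.E} (h : Λ.d l = Λ.d m) :
    QT.S' l * QT.S m = if l = m then QT.P (Λ.s l) else 0 := by
  by_cases hl : Λ.d l = 0
  · have hm : Λ.d m = 0 := by rw [← h]; exact hl
    have hl' : l = Λ.ident (Λ.r l) := Λ.eq_ident_of_d_eq_zero l hl
    have hm' : m = Λ.ident (Λ.r m) := Λ.eq_ident_of_d_eq_zero m hm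
    by_cases he : l = m
    · rw [if_pos he, ← he, hl', QT.S'_ident, QT.S_ident, Λ.s_ident]
      exact QT.idem _
    · rw [if_neg he]
      have hrne : Λ.r l ≠ Λ.r m := fun hr => he (by rw [hl', hm', hr])
      rw [hl', hm', QT.S'_ident, QT.S_ident]
      exact QT.orth _ _ hrne
  · by_cases he : l = m
    · rw [if_pos he, ← he]; exact QT.KP3_eq l hl
    · rw [if_neg he]; exact QT.KP3_ne l m hl h he

lemma KP4_gen (QT : KPFamily Λ A) (v : Λ.V) (n : Fin k → ℕ) (F : Finset Λ.E)
    (hF : ∀ l : Λ.E, l ∈ F ↔ Λ.r l = v ∧ Λ.d l = n) :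
    QT.P v = ∑ l ∈ F, QT.S l * QT.S' l := by
  by_cases hn : n = 0
  · have hFs : F = {Λ.ident v} := by
      ext l
      rw [hF, Finset.mem_singleton]
      constructor
      · rintro ⟨h1, h2⟩
        rw [Λ.eq_ident_of_d_eq_zero l (by rw [h2, hn]), h1]
      · rintro rfl
        exact ⟨Λ.r_ident v, by rw [Λ.d_ident, hn]⟩
    rw [hFs, Finset.sum_singleton, QT.S_ident, QT.S'_ident]
    exact (QT.idem v).symm
  · exact QT.KP4 v n hn F hF

end Helpers

/-- **Lemma 3.3.**  If `(P,S)` is a Kumjian-Pask `Λ`-family and `l, m ∈ Λ`,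
then for every `q ≥ d(l) ∨ d(m)` we have
`S_{l*} S_m = Σ_{d(lα) = q, lα = mβ} S_α S_{β*}`. -/
theorem S'_mul_S_eq_sum (k : ℕ) (hk : 0 < k) (Λ : KGraph k)
    (hrf : Λ.RowFinite) (hns : Λ.NoSources)
    (R : Type) [CommRing R] (A : Type) [Ring A] [Algebra R A]
    (QT : KPFamily Λ A) (lam mu : Λ.E) (q : Fin k → ℕ)
    (hq : Λ.d lam ⊔ Λ.d mu ≤ q)
    (F : Finset (Λ.E × Λ.E))
    (hF : ∀ p : Λ.E × Λ.E, p ∈ F ↔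
      Λ.r p.1 = Λ.s lam ∧ Λ.r p.2 = Λ.s mu ∧
      Λ.d p.1 = q - Λ.d lam ∧ Λ.comp lam p.1 = Λ.comp mu p.2) :
    QT.S' lam * QT.S mu = ∑ p ∈ F, QT.S p.1 * QT.S' p.2 := by
  classical
  have hlq : Λ.d lam ≤ q := le_trans le_sup_left hq
  have hmq : Λ.d mu ≤ q := le_trans le_sup_right hq
  have h1 : Λ.d lam + (q - Λ.d lam) = q := funext fun i => Nat.add_sub_cancel' (hlq i)
  have h2 : Λ.d mu + (q - Λ.d mu) = q := funext fun i => Nat.add_sub_cancel' (hmq i)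
  set F1 : Finset Λ.E := (hrf (Λ.s lam) (q - Λ.d lam)).toFinset with hF1def
  set F2 : Finset Λ.E := (hrf (Λ.s mu) (q - Λ.d mu)).toFinset with hF2def
  have hF1 : ∀ α : Λ.E, α ∈ F1 ↔ Λ.r α = Λ.s lam ∧ Λ.d α = q - Λ.d lam :=
    fun α => Set.Finite.mem_toFinset _
  have hF2 : ∀ β : Λ.E, β ∈ F2 ↔ Λ.r β = Λ.s mu ∧ Λ.d β = q - Λ.d mu :=
    fun β => Set.Finite.mem_toFinset _
  have hP1 : QT.P (Λ.s lam) = ∑ α ∈ F1, QT.S α * QT.S' α := KP4_gen QT _ _ _ hF1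
  have hP2 : QT.P (Λ.s mu) = ∑ β ∈ F2, QT.S β * QT.S' β := KP4_gen QT _ _ _ hF2
  -- identify F with the filtered product
  have hFF : F = (F1 ×ˢ F2).filter fun p => Λ.comp lam p.1 = Λ.comp mu p.2 := by
    ext p
    rw [hF, Finset.mem_filter, Finset.mem_product, hF1, hF2]
    constructor
    · rintro ⟨ha, hb, hc, hd⟩
      have hd2 : Λ.d p.2 = q - Λ.d mu := by
        have key : Λ.d mu + Λ.d p.2 = q := by
          calc Λ.d mu + Λ.d p.2 = Λ.d (Λ.comp mu p.2) := (Λ.d_comp hb.symm).symm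
            _ = Λ.d (Λ.comp lam p.1) := by rw [hd]
            _ = Λ.d lam + Λ.d p.1 := Λ.d_comp ha.symm
            _ = q := by rw [hc, h1]
        funext i
        have := congrFun key i
        have h2i := congrFun h2 i
        simp only [Pi.add_apply, Pi.sub_apply] at this h2i ⊢
        omega
      exact ⟨⟨⟨ha, hc⟩, hb, hd2⟩, hd⟩
    · rintro ⟨⟨⟨ha, hc⟩, hb, _⟩, hd⟩
      exact ⟨ha, hb, hc, hd⟩
  -- per-term computation
  have hterm : ∀ α ∈ F1, ∀ β ∈ F2,
      (QT.S α * QT.S' α) * ((QT.S' lam * QT.S mu) * (QT.S β * QT.S' β)) =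
        if Λ.comp lam α = Λ.comp mu β then QT.S α * QT.S' β else 0 := by
    intro α hα β hβ
    obtain ⟨hαr, hαd⟩ := (hF1 α).mp hα
    obtain ⟨hβr, hβd⟩ := (hF2 β).mp hβ
    have hA : QT.S' α * QT.S' lam = QT.S' (Λ.comp lam α) := mul_S'_gen QT hαr.symm
    have hB : QT.S mu * QT.S β = QT.S (Λ.comp mu β) := mul_S_gen QT hβr.symm
    have e : (QT.S α * QT.S' α) * ((QT.S' lam * QT.S mu) * (QT.S β * QT.S' β)) =
        QT.S α * ((QT.S' α * QT.S' lam) * (QT.S mu * QT.S β)) * QT.S' β := by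
      simp only [mul_assoc]
    have hdc : Λ.d (Λ.comp lam α) = Λ.d (Λ.comp mu β) := by
      rw [Λ.d_comp hαr.symm, Λ.d_comp hβr.symm, hαd, hβd, h1, h2]
    rw [e, hA, hB, KP3_gen QT hdc]
    by_cases hcc : Λ.comp lam α = Λ.comp mu β
    · rw [if_pos hcc, if_pos hcc, Λ.s_comp hαr.symm]
      rw [S_mul_P_gen QT α]
    · rw [if_neg hcc, if_neg hcc, mul_zero, zero_mul]
  symm
  calc ∑ p ∈ F, QT.S p.1 * QT.S' p.2
      = ∑ p ∈ (F1 ×ˢ F2).filter fun p => Λ.comp lam p.1 = Λ.comp mu p.2,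
          QT.S p.1 * QT.S' p.2 := by rw [hFF]
    _ = ∑ p ∈ F1 ×ˢ F2,
          if Λ.comp lam p.1 = Λ.comp mu p.2 then QT.S p.1 * QT.S' p.2 else 0 :=
        Finset.sum_filter _ _
    _ = ∑ α ∈ F1, ∑ β ∈ F2,
          if Λ.comp lam α = Λ.comp mu β then QT.S α * QT.S' β else 0 :=
        by exact Finset.sum_product _ _ _
    _ = ∑ α ∈ F1, ∑ β ∈ F2,
          (QT.S α * QT.S' α) * ((QT.S' lam * QT.S mu) * (QT.S β * QT.S' β)) :=
        Finset.sum_congr rfl fun α hα => Finset.sum_congr rfl fun β hβ =>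
          (hterm α hα β hβ).symm
    _ = ∑ α ∈ F1, (QT.S α * QT.S' α) *
          ((QT.S' lam * QT.S mu) * ∑ β ∈ F2, QT.S β * QT.S' β) :=
        Finset.sum_congr rfl fun α _ => by rw [← Finset.mul_sum, ← Finset.mul_sum]
    _ = (∑ α ∈ F1, QT.S α * QT.S' α) *
          ((QT.S' lam * QT.S mu) * ∑ β ∈ F2, QT.S β * QT.S' β) :=
        (Finset.sum_mul _ _ _).symm
    _ = QT.P (Λ.s lam) * ((QT.S' lam * QT.S mu) * QT.P (Λ.s mu)) := by
        rw [← hP1, ← hP2]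
    _ = QT.S' lam * QT.S mu := by
        rw [mul_assoc, S_mul_P_gen QT mu, ← mul_assoc, P_mul_S'_gen QT lam]

end KP
end

section
/- Let k be a positive integer, Λ a row-finite k-graph without sources, and R a commutative ring with 1. Then every nonzero element x of the Kumjian-Pask algebra KP_R(Λ) can be written in normal form: x = Σ_{(α,β)∈F} r_{α,β} s_α s_{β*}, where F is a finite subset of Λ × Λ, r_{α,β} ∈ R∖{0} for every (α,β) ∈ F, and all the β with (α,β) ∈ F have the same degree. -/
namespace KP

section Helpers

variable {k : ℕ} {Λ : KGraph k} {A : Type} [Ring A] (fam : KPFamily Λ A)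

lemma KPFamily.S_mul_P_all (l : Λ.E) : fam.S l * fam.P (Λ.s l) = fam.S l := by
  by_cases h : Λ.d l = 0
  · have hb := Λ.eq_ident_of_d_eq_zero l h
    rw [hb, fam.S_ident, Λ.s_ident]
    exact fam.idem _
  · exact fam.S_mul_P l h

lemma KPFamily.P_mul_S'_all (l : Λ.E) : fam.P (Λ.s l) * fam.S' l = fam.S' l := by
  by_cases h : Λ.d l = 0
  · have hb := Λ.eq_ident_of_d_eq_zero l h
    rw [hb, fam.S'_ident, Λ.s_ident]
    exact fam.idem _
  · exact fam.P_mul_S' l h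

lemma KPFamily.S_mul_S'_eq_zero {a b : Λ.E} (h : Λ.s a ≠ Λ.s b) :
    fam.S a * fam.S' b = 0 := by
  calc fam.S a * fam.S' b
      = (fam.S a * fam.P (Λ.s a)) * (fam.P (Λ.s b) * fam.S' b) := by
        rw [fam.S_mul_P_all, fam.P_mul_S'_all]
    _ = fam.S a * ((fam.P (Λ.s a) * fam.P (Λ.s b)) * fam.S' b) := by
        simp only [mul_assoc]
    _ = 0 := by rw [fam.orth _ _ h, zero_mul, mul_zero]

lemma KPFamily.comp_S {a l : Λ.E} (h : Λ.s a = Λ.r l) (hl : Λ.d l ≠ 0) :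
    fam.S a * fam.S l = fam.S (Λ.comp a l) := by
  by_cases ha : Λ.d a = 0
  · have hb := Λ.eq_ident_of_d_eq_zero a ha
    have h1 : Λ.s a = Λ.r a := by rw [hb, Λ.s_ident, Λ.r_ident]
    have hra : Λ.r a = Λ.r l := h1.symm.trans h
    have hcomp : Λ.comp a l = l := by rw [hb, hra]; exact Λ.ident_comp l
    rw [hcomp, hb, fam.S_ident, hra]
    exact fam.P_mul_S l hl
  · exact fam.mul_S ha hl h

lemma KPFamily.comp_S' {b l : Λ.E} (h : Λ.s b = Λ.r l) (hl : Λ.d l ≠ 0) :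
    fam.S' l * fam.S' b = fam.S' (Λ.comp b l) := by
  by_cases hb0 : Λ.d b = 0
  · have hb := Λ.eq_ident_of_d_eq_zero b hb0
    have h1 : Λ.s b = Λ.r b := by rw [hb, Λ.s_ident, Λ.r_ident]
    have hrb : Λ.r b = Λ.r l := h1.symm.trans h
    have hcomp : Λ.comp b l = l := by rw [hb, hrb]; exact Λ.ident_comp l
    rw [hcomp, hb, fam.S'_ident, hrb]
    exact fam.S'_mul_P l hl
  · exact fam.mul_S' hb0 hl h

lemma KPFamily.expand {R : Type} [CommRing R] [Algebra R A] (hrf : Λ.RowFinite)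
    {a b : Λ.E} (hs : Λ.s a = Λ.s b) (n : Fin k → ℕ) (hn : Λ.d b ≤ n) :
    fam.S a * fam.S' b ∈ Submodule.span R
      {y : A | ∃ a' b' : Λ.E, Λ.d b' = n ∧ y = fam.S a' * fam.S' b'} := by
  classical
  by_cases h0 : n - Λ.d b = 0
  · have hdb : Λ.d b = n := by
      funext i
      have h1 : n i - Λ.d b i = 0 := by
        have := congrFun h0 i
        simpa using this
      have h2 : Λ.d b i ≤ n i := hn i
      omega
    exact Submodule.subset_span ⟨a, b, hdb, rfl⟩
  · set F := (hrf (Λ.s b) (n - Λ.d b)).toFinset with hFdef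
    have hF : ∀ l, l ∈ F ↔ Λ.r l = Λ.s b ∧ Λ.d l = n - Λ.d b := by
      intro l
      rw [hFdef, Set.Finite.mem_toFinset]
      exact Iff.rfl
    have hP : fam.P (Λ.s b) = ∑ l ∈ F, fam.S l * fam.S' l := fam.KP4 _ _ h0 F hF
    have key : fam.S a * fam.S' b
        = ∑ l ∈ F, fam.S (Λ.comp a l) * fam.S' (Λ.comp b l) := by
      conv_lhs => rw [← fam.P_mul_S'_all b]
      rw [hP, Finset.sum_mul, Finset.mul_sum]
      refine Finset.sum_congr rfl fun l hl => ?_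
      obtain ⟨hrl, hdl⟩ := (hF l).1 hl
      have hdl0 : Λ.d l ≠ 0 := by rw [hdl]; exact h0
      rw [← fam.comp_S (hs.trans hrl.symm) hdl0, ← fam.comp_S' hrl.symm hdl0]
      simp only [mul_assoc]
    rw [key]
    refine Submodule.sum_mem _ fun l hl => Submodule.subset_span ?_
    obtain ⟨hrl, hdl⟩ := (hF l).1 hl
    refine ⟨Λ.comp a l, Λ.comp b l, ?_, rfl⟩
    rw [Λ.d_comp hrl.symm, hdl]
    funext i
    have h2 : Λ.d b i ≤ n i := hn i
    simp only [Pi.add_apply, Pi.sub_apply]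
    omega

end Helpers

set_option maxHeartbeats 1000000 in
set_option synthInstance.maxHeartbeats 400000 in
/-- **Lemma 4.2 (normal form).**  Every nonzero `x ∈ KP_R(Λ)` can be written
as `x = Σ_{(a,b) ∈ F} c_{a,b} • s_a s_{b*}` where `F` is a finite subset of
`Λ × Λ`, all coefficients `c_{a,b}` are nonzero, and all the `b` occurring in
`F` have the same degree `n`. -/
theorem exists_normal_form (k : ℕ) (hk : 0 < k) (Λ : KGraph k)
    (hrf : Λ.RowFinite) (hns : Λ.NoSources)
    (R : Type) [CommRing R] (A : Type) [Ring A] [Algebra R A]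
    (KP : KPAlgebra Λ R A) (x : A) (hx : x ≠ 0) :
    ∃ (F : Finset (Λ.E × Λ.E)) (c : Λ.E × Λ.E → R) (n : Fin k → ℕ),
      x = ∑ p ∈ F, c p • (KP.fam.S p.1 * KP.fam.S' p.2) ∧
      (∀ p ∈ F, c p ≠ 0) ∧ (∀ p ∈ F, Λ.d p.2 = n) := by
  classical
  -- Step A: x lies in the span of all products S a * S' b.
  have hx0 : x ∈ Submodule.span R
      {y : A | ∃ a b : Λ.E, y = KP.fam.S a * KP.fam.S' b} := by
    obtain ⟨y, hy⟩ := KP.grading_internal.surjective x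
    rw [← hy]
    refine DirectSum.induction_on y ?_ ?_ ?_
    · simp
    · intro i z
      rw [DirectSum.coeAddMonoidHom_of]
      have hz : (z : A) ∈ (KP.grading i : Set A) := z.2
      rw [KP.grading_eq] at hz
      refine Submodule.span_mono ?_ hz
      rintro w ⟨l, m, -, hw⟩
      exact ⟨l, m, hw⟩
    · intro u v hu hv
      rw [map_add]
      exact add_mem hu hv
  -- extract a finite representation
  rw [Submodule.mem_span_set'] at hx0
  obtain ⟨N, f, g, hg⟩ := hx0
  choose a b hab using fun i => (g i).2
  -- a common degree
  set n : Fin k → ℕ := fun j => Finset.univ.sup fun i : Fin N => Λ.d (b i) j with hndef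
  -- Step B: x lies in the span of products with second degree n.
  have hx1 : x ∈ Submodule.span R
      {y : A | ∃ a' b' : Λ.E, Λ.d b' = n ∧ y = KP.fam.S a' * KP.fam.S' b'} := by
    rw [← hg]
    refine Submodule.sum_mem _ fun i _ => Submodule.smul_mem _ _ ?_
    rw [hab i]
    by_cases hs : Λ.s (a i) = Λ.s (b i)
    · refine KP.fam.expand hrf hs n fun j => ?_
      rw [hndef]
      exact Finset.le_sup (f := fun i : Fin N => Λ.d (b i) j) (Finset.mem_univ i)
    · rw [KP.fam.S_mul_S'_eq_zero hs]
      exact zero_mem _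
  rw [Submodule.mem_span_set'] at hx1
  obtain ⟨M, f2, g2, hg2⟩ := hx1
  choose a2 b2 hd2 hab2 using fun i => (g2 i).2
  -- assemble the coefficients into a finitely supported function
  set G : (Λ.E × Λ.E) →₀ R :=
    ∑ i : Fin M, Finsupp.single (a2 i, b2 i) (f2 i) with hGdef
  have hlin : Finsupp.linearCombination R
      (fun p : Λ.E × Λ.E => KP.fam.S p.1 * KP.fam.S' p.2) G = x := by
    rw [hGdef, map_sum, ← hg2]
    refine Finset.sum_congr rfl fun i _ => ?_
    rw [Finsupp.linearCombination_single, hab2 i]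
  refine ⟨G.support, G, n, ?_, ?_, ?_⟩
  · rw [← hlin, Finsupp.linearCombination_apply, Finsupp.sum]
  · intro p hp
    exact Finsupp.mem_support_iff.1 hp
  · intro p hp
    rw [hGdef] at hp
    obtain ⟨i, -, hpi⟩ := Finsupp.mem_support_finset_sum p hp
    have h2 := Finsupp.support_single_subset hpi
    rw [Finset.mem_singleton] at h2
    rw [h2]
    exact hd2 i

end KP
end

section
/- Let E be a directed graph with no sources. Then E is aperiodic if and only if every cycle in E has an entry. -/
namespace KP

/-- A directed graph. -/
structure DirGraph where
  V : Type
  Edge : Type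
  r : Edge → V
  s : Edge → V

namespace DirGraph

/-- A list of edges `l = [l_1, …, l_N]` is a path when consecutive edges are
composable: `s(l_i) = r(l_{i+1})`. -/
def IsPath (E : DirGraph) (l : List E.Edge) : Prop :=
  l.Chain' fun a b => E.s a = E.r b

/-- The vertex sitting at position `i` along a path `l` with range `v`: it is
`v` when `i = 0` and the source of the `i`-th edge otherwise. -/
def vtxAt (E : DirGraph) (l : List E.Edge) (v : E.V) (i : ℕ) : E.V :=
  match (l.take i).getLast? with
  | some e => E.s e
  | none => v

/-- `E` has no sources: every vertex receives at least one edge. -/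
def NoSources (E : DirGraph) : Prop := ∀ v : E.V, ∃ e : E.Edge, E.r e = v

/-- `E` is aperiodic: for every vertex `v` and all `m < n` there is a path `l`
with range `v`, `|l| ≥ n`, such that the subpath `l_{m+1} ⋯ l_{m+|l|-n}`
differs from the subpath `l_{n+1} ⋯ l_{|l|}` (when `|l| = n` these are paths
of length `0`, identified with the vertices at which they sit). -/
def Aperiodic (E : DirGraph) : Prop :=
  ∀ (v : E.V) (m n : ℕ), m < n →
    ∃ l : List E.Edge, E.IsPath l ∧ n ≤ l.length ∧
      l.head?.map E.r = some v ∧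
      (if l.length = n then E.vtxAt l v m ≠ E.vtxAt l v n
       else (l.drop m).take (l.length - n) ≠ l.drop n)

/-- A cycle: a path of length at least `1` whose range equals its source. -/
def IsCycle (E : DirGraph) (l : List E.Edge) : Prop :=
  E.IsPath l ∧ l ≠ [] ∧ l.head?.map E.r = l.getLast?.map E.s

/-- An entry of the cycle `l`: an edge `e ≠ l_i` with `r(e) = r(l_i)` for some `i`. -/
def HasEntry (E : DirGraph) (l : List E.Edge) : Prop :=
  ∃ (i : ℕ) (h : i < l.length) (e : E.Edge),
    E.r e = E.r (l.get ⟨i, h⟩) ∧ e ≠ l.get ⟨i, h⟩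

end DirGraph


section AuxLemmas

open DirGraph

variable {E : DirGraph}

lemma vtxAt_zero (l : List E.Edge) (v : E.V) : E.vtxAt l v 0 = v := rfl

lemma vtxAt_succ (l : List E.Edge) (v : E.V) {j : ℕ} (h : j < l.length) :
    E.vtxAt l v (j+1) = E.s l[j] := by
  have : (l.take (j+1)).getLast? = some l[j] := by
    rw [List.getLast?_eq_getElem?]
    simp [List.length_take, Nat.min_eq_left (by omega : j+1 ≤ l.length)]
  unfold DirGraph.vtxAt
  rw [this]

lemma path_step {l : List E.Edge} (hp : E.IsPath l) {j : ℕ} (h : j + 1 < l.length) :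
    E.s l[j] = E.r l[j+1] := by
  have := List.isChain_iff_getElem.1 hp j (by omega)
  simpa using this

lemma range_getElem {l : List E.Edge} {v : E.V} (hp : E.IsPath l)
    (hhead : l.head?.map E.r = some v) {j : ℕ} (h : j < l.length) :
    E.r l[j] = E.vtxAt l v j := by
  induction j with
  | zero =>
    rw [vtxAt_zero]
    rw [List.head?_eq_getElem?] at hhead
    simp [List.getElem?_eq_getElem h] at hhead
    exact hhead
  | succ j ih =>
    rw [vtxAt_succ _ _ (by omega)]
    exact (path_step hp h).symm

lemma exists_path_len (hns : E.NoSources) (v : E.V) (n : ℕ) :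
    ∃ l : List E.Edge, E.IsPath l ∧ l.length = n ∧ (n ≠ 0 → l.head?.map E.r = some v) := by
  induction n generalizing v with
  | zero => exact ⟨[], List.isChain_nil, rfl, by simp⟩
  | succ n ih =>
    obtain ⟨e, he⟩ := hns v
    obtain ⟨l, hp, hl, hh⟩ := ih (E.s e)
    refine ⟨e :: l, ?_, by simp [hl], ?_⟩
    · rw [DirGraph.IsPath]; change List.IsChain _ (e :: l); rw [List.isChain_cons]
      refine ⟨?_, hp⟩
      intro b hb
      rcases n with _ | n
      · rw [List.length_eq_zero_iff] at hl; subst hl; simp at hb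
      · have := hh (by omega)
        cases l with
        | nil => simp at hb
        | cons a t => simp at hb this; rw [← hb, ← this]
    · intro _; simp [he]

lemma getElem_eq_of_eq {α : Type*} (l : List α) {i j : ℕ} (e : i = j)
    (h : j < l.length) : l[i]'(by omega) = l[j] := by subst e; rfl

end AuxLemmas

/-- **Lemma 4.4.**  A directed graph without sources is aperiodic if and only
if every cycle has an entry. -/
theorem dirGraph_aperiodic_iff_every_cycle_hasEntry (E : DirGraph)
    (hns : E.NoSources) :
    E.Aperiodic ↔ ∀ l : List E.Edge, E.IsCycle l → E.HasEntry l := by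
  constructor
  · -- aperiodic → every cycle has an entry
    intro hap l hcyc
    by_contra hne
    obtain ⟨hpath, hne0, hrs⟩ := hcyc
    have hN : 0 < l.length := List.length_pos_iff.2 hne0
    set N := l.length with hNdef
    have hcyc' : E.r l[0] = E.s l[N-1] := by
      rw [List.head?_eq_getElem?, List.getLast?_eq_getElem?] at hrs
      simp [List.getElem?_eq_getElem (show 0 < l.length by omega),
        List.getElem?_eq_getElem (show l.length - 1 < l.length by omega)] at hrs
      exact hrs
    unfold DirGraph.HasEntry at hne
    push_neg at hne
    simp only [List.get_eq_getElem] at hne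
    obtain ⟨p, hpp, hplen, hphead, hpcond⟩ := hap (E.r l[0]) 0 N hN
    have hmlt : ∀ j : ℕ, j % N < l.length := fun j => Nat.mod_lt _ hN
    have key : ∀ j, (hj : j < p.length) → p[j] = l[j % N]'(hmlt j) := by
      intro j
      induction j with
      | zero =>
        intro hj
        have hr0 : E.r p[0] = E.r l[0] := by
          rw [List.head?_eq_getElem?] at hphead
          simp [List.getElem?_eq_getElem hj] at hphead
          exact hphead
        have h0 := hne 0 hN p[0] hr0
        exact h0.trans (getElem_eq_of_eq l (Nat.zero_mod N).symm hN)
      | succ j ih =>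
        intro hj
        have hj' : j < p.length := by omega
        have h1 : p[j] = l[j % N]'(hmlt j) := ih hj'
        have hjm : j % N < N := Nat.mod_lt _ hN
        have h2 : E.r p[j+1] = E.s (l[j % N]'(hmlt j)) := by
          rw [← h1]; exact (path_step hpp hj).symm
        have hmod : (j+1) % N = (j % N + 1) % N := by
          conv_lhs => rw [← Nat.mod_add_div j N]
          rw [Nat.add_right_comm, Nat.add_mul_mod_self_left]
        by_cases hc : j % N + 1 = N
        · have hm0 : (j+1) % N = 0 := by rw [hmod, hc, Nat.mod_self]
          have hje : j % N = N - 1 := Nat.eq_sub_of_add_eq hc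
          have gc1 : l[j % N]'(hmlt j) = l[N-1]'(by omega) :=
            getElem_eq_of_eq l hje (by omega)
          have gc2 : l[0]'hN = l[(j+1) % N]'(hmlt (j+1)) :=
            (getElem_eq_of_eq l hm0.symm (hmlt (j+1)) : _)
          exact hne ((j+1) % N) (hmlt (j+1)) p[j+1]
            (h2.trans ((congrArg E.s gc1).trans (hcyc'.symm.trans (congrArg E.r gc2))))
        · have hm1 : (j+1) % N = j % N + 1 := by
            rw [hmod]; exact Nat.mod_eq_of_lt (lt_of_le_of_ne hjm hc)
          have h4 : j % N + 1 < N := lt_of_le_of_ne hjm hc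
          have h5 := path_step hpath (show j % N + 1 < l.length from h4)
          have gc3 : l[j % N + 1]'(h4) = l[(j+1) % N]'(hmlt (j+1)) :=
            (getElem_eq_of_eq l hm1.symm (hmlt (j+1)) : _)
          exact hne ((j+1) % N) (hmlt (j+1)) p[j+1]
            (h2.trans (h5.trans (congrArg E.r gc3)))
    by_cases hL : p.length = N
    · rw [if_pos hL] at hpcond
      apply hpcond
      rw [vtxAt_zero]
      have hN1p : N - 1 < p.length := by omega
      have e1 : E.vtxAt p (E.r l[0]) N = E.s (p[N-1]'hN1p) := by
        have := vtxAt_succ p (E.r l[0]) hN1p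
        rwa [show N-1+1 = N by omega] at this
      have e2 : p[N-1]'hN1p = l[N-1]'(by omega) :=
        (key (N-1) hN1p).trans (getElem_eq_of_eq l (Nat.mod_eq_of_lt (by omega)) (by omega))
      rw [e1]
      exact hcyc'.trans (congrArg E.s e2.symm)
    · rw [if_neg hL] at hpcond
      apply hpcond
      apply List.ext_getElem
      · simp only [List.length_take, List.length_drop, List.drop_zero]; omega
      · intro i h1 h2
        have hi2 : N + i < p.length := by
          simp only [List.length_drop] at h2; omega
        have hi1 : i < p.length := by omega
        simp only [List.drop_zero, List.getElem_take, List.getElem_drop]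
        exact (key i hi1).trans
          ((key (N+i) hi2).trans (getElem_eq_of_eq l (Nat.add_mod_left N i) (hmlt i))).symm
  · -- every cycle has an entry → aperiodic
    intro hent v m n hmn
    obtain ⟨lam, hp, hlen, hh'⟩ := exists_path_len hns v n
    have hh : lam.head?.map E.r = some v := hh' (by omega)
    by_cases hv : E.vtxAt lam v m ≠ E.vtxAt lam v n
    · exact ⟨lam, hp, hlen.ge, hh, by rw [if_pos hlen]; exact hv⟩
    push_neg at hv
    set μ := (lam.drop m).take (n - m) with hμ
    have hμlen : μ.length = n - m := by simp [hμ, hlen]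
    have hμget : ∀ i, (hi : i < n - m) → μ[i]'(by omega) = lam[m+i]'(by omega) := by
      intro i hi
      simp only [hμ, List.getElem_take, List.getElem_drop]
    have hμpath : E.IsPath μ := by
      rw [hμ]; exact (List.IsChain.drop hp m).take _
    have hμne : μ ≠ [] := by
      intro h; rw [h] at hμlen; simp at hμlen; omega
    have hlam_last : E.s (lam[n-1]'(by omega)) = E.vtxAt lam v n := by
      have := vtxAt_succ lam v (j := n-1) (by omega)
      rw [show n-1+1 = n by omega] at this
      exact this.symm
    have hμ0 : E.r (μ[0]'(by omega)) = E.vtxAt lam v m :=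
      (congrArg E.r (hμget 0 (by omega))).trans (range_getElem hp hh (by omega))
    have hμlast : E.s (μ[μ.length - 1]'(by omega)) = E.vtxAt lam v n := by
      have g1 : μ[μ.length - 1]'(by omega) = μ[n-m-1]'(by omega) :=
        getElem_eq_of_eq μ (by omega) (by omega)
      have g2 : μ[n-m-1]'(by omega) = lam[m+(n-m-1)]'(by omega) := hμget (n-m-1) (by omega)
      have g3 : lam[m+(n-m-1)]'(by omega) = lam[n-1]'(by omega) :=
        getElem_eq_of_eq lam (by omega) (by omega)
      exact (congrArg E.s ((g1.trans g2).trans g3)).trans hlam_last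
    have hμcyc : E.IsCycle μ := by
      refine ⟨hμpath, hμne, ?_⟩
      have hh0 : μ.head? = some (μ[0]'(by omega)) := by
        rw [List.head?_eq_getElem?, List.getElem?_eq_getElem (show 0 < μ.length by omega)]
      have hl0 : μ.getLast? = some (μ[μ.length - 1]'(by omega)) := by
        rw [List.getLast?_eq_getElem?,
          List.getElem?_eq_getElem (show μ.length - 1 < μ.length by omega)]
      rw [hh0, hl0]
      simp only [Option.map_some]
      exact congrArg some (hμ0.trans (hv.trans hμlast.symm))
    obtain ⟨i, hi, e, hre, hene⟩ := hent μ hμcyc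
    simp only [List.get_eq_getElem] at hre hene
    have hiN : i < n - m := by omega
    set L := lam ++ (μ.take i ++ [e]) with hLdef
    have hLlen : L.length = n + (i+1) := by
      simp [hLdef, hlen, hμlen]; omega
    have hLpath : E.IsPath L := by
      rw [hLdef, DirGraph.IsPath]; change List.IsChain _ (lam ++ (μ.take i ++ [e])); rw [List.isChain_append]
      refine ⟨hp, ?_, ?_⟩
      · rw [List.isChain_append]
        refine ⟨List.IsChain.take hμpath i, List.isChain_singleton _, ?_⟩
        intro x hx y hy
        simp at hy; subst hy
        rcases Nat.eq_zero_or_pos i with hi0 | hi0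
        · simp [hi0] at hx
        · have hxl : (μ.take i).getLast? = some (μ[i-1]'(by omega)) := by
            rw [List.getLast?_eq_getElem?]
            simp [List.length_take, Nat.min_eq_left (show i ≤ μ.length by omega),
              List.getElem?_take_of_lt (show i-1 < i by omega),
              List.getElem?_eq_getElem (show i-1 < μ.length by omega)]
          rw [hxl] at hx
          simp at hx; subst hx
          have h6 := path_step hμpath (show (i-1)+1 < μ.length by omega)
          rw [hre]
          exact h6.trans (congrArg E.r (getElem_eq_of_eq μ (show i-1+1 = i by omega) (by omega)))
      · intro x hx y hy
        have hxl : lam.getLast? = some (lam[n-1]'(by omega)) := by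
          rw [List.getLast?_eq_getElem?]
          simp [hlen, List.getElem?_eq_getElem (show n-1 < lam.length by omega)]
        rw [hxl] at hx
        simp at hx; subst hx
        have hyr : E.r y = E.r (μ[0]'(by omega)) := by
          rcases Nat.eq_zero_or_pos i with hi0 | hi0
          · simp [hi0] at hy; subst hy
            exact hre.trans (congrArg E.r (getElem_eq_of_eq μ hi0 (by omega)))
          · have hhd : (μ.take i ++ [e]).head? = some (μ[0]'(by omega)) := by
              rw [List.head?_eq_getElem?,
                List.getElem?_append_left (by simp [List.length_take]; omega)]
              simp [List.getElem?_take_of_lt hi0,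
                List.getElem?_eq_getElem (show 0 < μ.length by omega)]
            rw [hhd] at hy; simp at hy; subst hy; rfl
        rw [hyr]
        exact hlam_last.trans (hv.symm.trans hμ0.symm)
    have hr0lam : E.r (lam[0]'(by omega)) = v := by
      rw [List.head?_eq_getElem?, List.getElem?_eq_getElem (show 0 < lam.length by omega)] at hh
      simpa using hh
    have hL0 : L[0]'(by omega) = lam[0]'(by omega) :=
      (getElem_congr_coll hLdef).trans (List.getElem_append_left (by omega))
    have hLhead : L.head?.map E.r = some v := by
      rw [List.head?_eq_getElem?, List.getElem?_eq_getElem (show 0 < L.length by omega)]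
      simp only [Option.map_some]
      exact congrArg some ((congrArg E.r hL0).trans hr0lam)
    refine ⟨L, hLpath, by omega, hLhead, ?_⟩
    rw [if_neg (by omega)]
    intro heq
    have hdrop : L.drop n = μ.take i ++ [e] := by
      rw [hLdef, ← hlen]; exact List.drop_left
    have h1 : ((L.drop m).take (L.length - n))[i]? = some (lam[m+i]'(by omega)) := by
      rw [List.getElem?_take_of_lt (show i < L.length - n by omega), List.getElem?_drop,
        List.getElem?_eq_getElem (show m + i < L.length by omega)]
      have hLmi : L[m+i]'(show m+i < L.length by omega)
          = lam[m+i]'(show m+i < lam.length by omega) :=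
        (getElem_congr_coll hLdef).trans
          (List.getElem_append_left (show m+i < lam.length by omega))
      exact congrArg some hLmi
    have h2 : (L.drop n)[i]? = some e := by
      rw [hdrop, List.getElem?_append_right (by simp [List.length_take])]
      simp [List.length_take, Nat.min_eq_left (show i ≤ μ.length by omega)]
    rw [heq, h2] at h1
    apply hene
    have he : e = lam[m+i]'(by omega) := Option.some_injective _ h1
    exact he.trans (hμget i hiN).symm

end KP
end

section
/- (Cuntz-Krieger uniqueness theorem.) Let k be a positive integer, Λ an aperiodic row-finite k-graph without sources, R a commutative ring with 1, and A a ring. If π : KP_R(Λ) → A is a ring homomorphism such that π(rp_v) ≠ 0 for all r ∈ R∖{0} and all v ∈ Λ^0, then π is injective. -/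
namespace KP

/-! ### Auxiliary development for the Cuntz–Krieger uniqueness theorem -/

namespace KGraph

variable {k : ℕ} (Λ : KGraph k)

lemma s_eq_r_of_d_eq_zero {l : Λ.E} (h : Λ.d l = 0) : Λ.s l = Λ.r l := by
  rw [Λ.eq_ident_of_d_eq_zero l h, Λ.s_ident, Λ.r_ident]

open Classical in
/-- Canonical factorization of `l` at degree `m ≤ d l`. -/
noncomputable def fac (l : Λ.E) (m : Fin k → ℕ) : Λ.E × Λ.E :=
  if h : m ≤ Λ.d l then
    (Λ.factor l m (Λ.d l - m) (add_tsub_cancel_of_le h).symm).exists.choose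
  else (l, l)

lemma fac_spec {l : Λ.E} {m : Fin k → ℕ} (h : m ≤ Λ.d l) :
    Λ.d (Λ.fac l m).1 = m ∧ Λ.d (Λ.fac l m).2 = Λ.d l - m ∧
      Λ.s (Λ.fac l m).1 = Λ.r (Λ.fac l m).2 ∧ Λ.comp (Λ.fac l m).1 (Λ.fac l m).2 = l := by
  rw [fac]
  rw [dif_pos h]
  exact (Λ.factor l m (Λ.d l - m) (add_tsub_cancel_of_le h).symm).exists.choose_spec

lemma fac_eq {l a b : Λ.E} {m : Fin k → ℕ} (h : m ≤ Λ.d l) (ha : Λ.d a = m)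
    (hs : Λ.s a = Λ.r b) (hc : Λ.comp a b = l) : Λ.fac l m = (a, b) := by
  have hdl : Λ.d l = m + Λ.d b := by rw [← hc, Λ.d_comp hs, ha]
  have hdb : Λ.d b = Λ.d l - m := by rw [hdl, add_tsub_cancel_left]
  have hu := Λ.factor l m (Λ.d l - m) (add_tsub_cancel_of_le h).symm
  exact hu.unique (Λ.fac_spec h) ⟨ha, hdb, hs, hc⟩

noncomputable def take (l : Λ.E) (m : Fin k → ℕ) : Λ.E := (Λ.fac l m).1
noncomputable def drop (l : Λ.E) (m : Fin k → ℕ) : Λ.E := (Λ.fac l m).2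

variable {l a b : Λ.E} {m : Fin k → ℕ}

lemma d_take (h : m ≤ Λ.d l) : Λ.d (Λ.take l m) = m := (Λ.fac_spec h).1
lemma d_drop (h : m ≤ Λ.d l) : Λ.d (Λ.drop l m) = Λ.d l - m := (Λ.fac_spec h).2.1
lemma s_take (h : m ≤ Λ.d l) : Λ.s (Λ.take l m) = Λ.r (Λ.drop l m) := (Λ.fac_spec h).2.2.1
lemma comp_take_drop (h : m ≤ Λ.d l) : Λ.comp (Λ.take l m) (Λ.drop l m) = l :=
  (Λ.fac_spec h).2.2.2

lemma take_eq (h : m ≤ Λ.d l) (ha : Λ.d a = m) (hs : Λ.s a = Λ.r b)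
    (hc : Λ.comp a b = l) : Λ.take l m = a := by
  rw [take, Λ.fac_eq h ha hs hc]

lemma drop_eq (h : m ≤ Λ.d l) (ha : Λ.d a = m) (hs : Λ.s a = Λ.r b)
    (hc : Λ.comp a b = l) : Λ.drop l m = b := by
  rw [drop, Λ.fac_eq h ha hs hc]

lemma s_drop (h : m ≤ Λ.d l) : Λ.s (Λ.drop l m) = Λ.s l := by
  conv_rhs => rw [← Λ.comp_take_drop h]
  rw [Λ.s_comp (Λ.s_take h)]

lemma r_take (h : m ≤ Λ.d l) : Λ.r (Λ.take l m) = Λ.r l := by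
  conv_rhs => rw [← Λ.comp_take_drop h]
  rw [Λ.r_comp (Λ.s_take h)]

lemma take_comp {x y : Λ.E} (hxy : Λ.s x = Λ.r y) {c : Fin k → ℕ} (hc : c ≤ Λ.d x) :
    Λ.take (Λ.comp x y) c = Λ.take x c ∧
      Λ.drop (Λ.comp x y) c = Λ.comp (Λ.drop x c) y := by
  have hle : c ≤ Λ.d (Λ.comp x y) := by
    rw [Λ.d_comp hxy]; exact le_trans hc le_self_add
  have hcomp1 : Λ.s (Λ.drop x c) = Λ.r y := by rw [Λ.s_drop hc]; exact hxy
  have hs2 : Λ.s (Λ.take x c) = Λ.r (Λ.comp (Λ.drop x c) y) := by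
    rw [Λ.r_comp hcomp1]; exact Λ.s_take hc
  have hcc : Λ.comp (Λ.take x c) (Λ.comp (Λ.drop x c) y) = Λ.comp x y := by
    rw [← Λ.comp_assoc (Λ.s_take hc) hcomp1, Λ.comp_take_drop hc]
  have := Λ.fac_eq hle (Λ.d_take hc) hs2 hcc
  constructor
  · rw [take, this]
  · rw [drop, this]

lemma drop_drop {p q : Fin k → ℕ} (h : p + q ≤ Λ.d l) :
    Λ.drop (Λ.drop l p) q = Λ.drop l (p + q) := by
  have hp : p ≤ Λ.d l := le_trans le_self_add h
  have hq : q ≤ Λ.d (Λ.drop l p) := by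
    rw [Λ.d_drop hp]; exact le_tsub_of_add_le_left h
  have hcomp1 : Λ.s (Λ.take l p) = Λ.r (Λ.take (Λ.drop l p) q) := by
    rw [Λ.r_take hq]; exact Λ.s_take hp
  have hd1 : Λ.d (Λ.comp (Λ.take l p) (Λ.take (Λ.drop l p) q)) = p + q := by
    rw [Λ.d_comp hcomp1, Λ.d_take hp, Λ.d_take hq]
  have hs1 : Λ.s (Λ.comp (Λ.take l p) (Λ.take (Λ.drop l p) q)) =
      Λ.r (Λ.drop (Λ.drop l p) q) := by
    rw [Λ.s_comp hcomp1]; exact Λ.s_take hq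
  have hc1 : Λ.comp (Λ.comp (Λ.take l p) (Λ.take (Λ.drop l p) q)) (Λ.drop (Λ.drop l p) q)
      = l := by
    rw [Λ.comp_assoc hcomp1 (Λ.s_take hq), Λ.comp_take_drop hq, Λ.comp_take_drop hp]
  exact (Λ.drop_eq h hd1 hs1 hc1).symm

/-- Our segment function. -/
noncomputable def sseg (l : Λ.E) (p q : Fin k → ℕ) : Λ.E := Λ.take (Λ.drop l p) (q - p)

lemma seg_eq_sseg {p q : Fin k → ℕ} (hpq : p ≤ q) (hq : q ≤ Λ.d l) :
    Λ.seg l p q = Λ.sseg l p q := by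
  have hp : p ≤ Λ.d l := le_trans hpq hq
  have hqp : q - p ≤ Λ.d (Λ.drop l p) := by
    rw [Λ.d_drop hp]; exact tsub_le_tsub_right hq p
  have hex : ∃ t : Λ.E × Λ.E × Λ.E, Λ.d t.1 = p ∧ Λ.d t.2.1 = q - p ∧
      Λ.s t.1 = Λ.r t.2.1 ∧ Λ.s t.2.1 = Λ.r t.2.2 ∧
      Λ.comp t.1 (Λ.comp t.2.1 t.2.2) = l := by
    refine ⟨(Λ.take l p, Λ.take (Λ.drop l p) (q - p), Λ.drop (Λ.drop l p) (q - p)),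
      Λ.d_take hp, Λ.d_take hqp, ?_, Λ.s_take hqp, ?_⟩
    · rw [Λ.r_take hqp]; exact Λ.s_take hp
    · rw [Λ.comp_take_drop hqp, Λ.comp_take_drop hp]
  unfold seg
  rw [dif_pos hex]
  obtain ⟨hd1, hd2, hs1, hs2, hc⟩ := hex.choose_spec
  set t := hex.choose
  have hdrop : Λ.drop l p = Λ.comp t.2.1 t.2.2 := by
    refine Λ.drop_eq hp hd1 ?_ hc
    rw [Λ.r_comp hs2]; exact hs1
  refine (Λ.take_eq hqp hd2 hs2 ?_).symm
  rw [hdrop]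

lemma sseg_comp_left {lam ρ : Λ.E} (h : Λ.s lam = Λ.r ρ) {p q : Fin k → ℕ}
    (hpq : p ≤ q) (hq : q ≤ Λ.d lam) :
    Λ.sseg (Λ.comp lam ρ) p q = Λ.sseg lam p q := by
  have hp : p ≤ Λ.d lam := le_trans hpq hq
  rw [sseg, sseg, (Λ.take_comp h hp).2]
  have hdr : Λ.s (Λ.drop lam p) = Λ.r ρ := by rw [Λ.s_drop hp]; exact h
  have : q - p ≤ Λ.d (Λ.drop lam p) := by
    rw [Λ.d_drop hp]; exact tsub_le_tsub_right hq p
  rw [(Λ.take_comp hdr this).1]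

lemma sseg_comp_right {x μ : Λ.E} (h : Λ.s x = Λ.r μ) {a b : Fin k → ℕ}
    (hab : a ≤ b) (hb : b ≤ Λ.d μ) :
    Λ.sseg (Λ.comp x μ) (Λ.d x + a) (Λ.d x + b) = Λ.sseg μ a b := by
  have hdropμ : Λ.drop (Λ.comp x μ) (Λ.d x) = μ := Λ.drop_eq
    (by rw [Λ.d_comp h]; exact le_self_add) rfl h rfl
  have hsum : Λ.d x + a ≤ Λ.d (Λ.comp x μ) := by
    rw [Λ.d_comp h]; exact add_le_add (le_refl _) (le_trans hab hb)
  rw [sseg, sseg, ← Λ.drop_drop hsum, hdropμ, add_tsub_add_eq_tsub_left]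

lemma sseg_factor {lam β γ : Λ.E} {m g e : Fin k → ℕ} (hm : m ≤ Λ.d lam)
    (hβ : Λ.drop lam m = β) (hγ : Λ.s β = Λ.r γ) (hbound : g + e + m ≤ Λ.d lam) :
    Λ.sseg (Λ.comp β γ) g (g + e) = Λ.sseg lam (m + g) (m + g + e) := by
  have hdβ : Λ.d β = Λ.d lam - m := by rw [← hβ]; exact Λ.d_drop hm
  have hge : g + e ≤ Λ.d β := by rw [hdβ]; exact le_tsub_of_add_le_right hbound
  have hg : g ≤ Λ.d β := le_trans le_self_add hge
  have he : e ≤ Λ.d (Λ.drop β g) := by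
    rw [Λ.d_drop hg]; exact le_tsub_of_add_le_left hge
  have hmg : m + g ≤ Λ.d lam := by
    refine le_trans ?_ hbound
    calc m + g = g + m := add_comm _ _
    _ ≤ g + e + m := by rw [add_right_comm]; exact le_self_add
  have hdropg : Λ.s (Λ.drop β g) = Λ.r γ := by rw [Λ.s_drop hg]; exact hγ
  rw [sseg, sseg, add_tsub_cancel_left, (Λ.take_comp hγ hg).2, (Λ.take_comp hdropg he).1]
  rw [← hβ, Λ.drop_drop hmg]
  congr 1
  have : m + g + e = (m + g) + e := rfl
  rw [this, add_tsub_cancel_left]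

lemma build (hap : Λ.Aperiodic) (L : List ((Fin k → ℕ) × (Fin k → ℕ)))
    (hL : ∀ q ∈ L, q.1 ≠ q.2) : ∀ w : Λ.V,
    ∃ μ : Λ.E, Λ.r μ = w ∧ ∀ q ∈ L, ∃ g e : Fin k → ℕ,
      g + e + q.1 ≤ Λ.d μ ∧ g + e + q.2 ≤ Λ.d μ ∧
      Λ.sseg μ (g + q.1) (g + q.1 + e) ≠ Λ.sseg μ (g + q.2) (g + q.2 + e) := by
  induction L with
  | nil =>
    intro w
    exact ⟨Λ.ident w, Λ.r_ident w, fun q hq => absurd hq List.not_mem_nil⟩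
  | cons q0 L ih =>
    intro w
    obtain ⟨l, hrl, hdl, hne⟩ := hap w q0.1 q0.2 (hL q0 List.mem_cons_self)
    obtain ⟨μ', hrμ', hwit⟩ := ih (fun q hq => hL q (List.mem_cons_of_mem q0 hq)) (Λ.s l)
    have hcomp : Λ.s l = Λ.r μ' := hrμ'.symm
    refine ⟨Λ.comp l μ', by rw [Λ.r_comp hcomp]; exact hrl, ?_⟩
    have hdμ : Λ.d (Λ.comp l μ') = Λ.d l + Λ.d μ' := Λ.d_comp hcomp
    intro q hq
    rcases List.mem_cons.1 hq with hq | hq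
    · subst hq
      set m := q.1; set n := q.2
      set e := Λ.d l - m ⊔ n with he
      have hem : e + m ≤ Λ.d l := by
        calc e + m ≤ e + m ⊔ n := add_le_add (le_refl e) le_sup_left
        _ = Λ.d l := by rw [he, tsub_add_cancel_of_le hdl]
      have hen : e + n ≤ Λ.d l := by
        calc e + n ≤ e + m ⊔ n := add_le_add (le_refl e) le_sup_right
        _ = Λ.d l := by rw [he, tsub_add_cancel_of_le hdl]
      refine ⟨0, e, ?_, ?_, ?_⟩
      · rw [zero_add, hdμ]; exact le_trans hem le_self_add
      · rw [zero_add, hdμ]; exact le_trans hen le_self_add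
      · have hme : m + e ≤ Λ.d l := by rw [add_comm]; exact hem
        have hne' : n + e ≤ Λ.d l := by rw [add_comm]; exact hen
        simp only [zero_add]
        rw [Λ.sseg_comp_left hcomp le_self_add hme,
          Λ.sseg_comp_left hcomp le_self_add hne']
        rw [← Λ.seg_eq_sseg le_self_add hme, ← Λ.seg_eq_sseg le_self_add hne']
        have h1 : m + Λ.d l - m ⊔ n = m + e := by
          rw [he, add_tsub_assoc_of_le hdl]
        have h2 : n + Λ.d l - m ⊔ n = n + e := by
          rw [he, add_tsub_assoc_of_le hdl]
        rw [h1, h2] at hne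
        exact hne
    · obtain ⟨g', e', hb1, hb2, hne'⟩ := hwit q hq
      refine ⟨Λ.d l + g', e', ?_, ?_, ?_⟩
      · rw [hdμ, add_assoc, add_assoc]
        exact add_le_add (le_refl _) (by rw [← add_assoc]; exact hb1)
      · rw [hdμ, add_assoc, add_assoc]
        exact add_le_add (le_refl _) (by rw [← add_assoc]; exact hb2)
      · have e1 : Λ.d l + g' + q.1 = Λ.d l + (g' + q.1) := by rw [add_assoc]
        have e2 : Λ.d l + g' + q.1 + e' = Λ.d l + (g' + q.1 + e') := by
          rw [add_assoc, add_assoc, add_assoc]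
        have e3 : Λ.d l + g' + q.2 = Λ.d l + (g' + q.2) := by rw [add_assoc]
        have e4 : Λ.d l + g' + q.2 + e' = Λ.d l + (g' + q.2 + e') := by
          rw [add_assoc, add_assoc, add_assoc]
        rw [e2, e1, e4, e3]
        have hble1 : g' + q.1 + e' ≤ Λ.d μ' := by
          rw [add_right_comm]; exact hb1
        have hble2 : g' + q.2 + e' ≤ Λ.d μ' := by
          rw [add_right_comm]; exact hb2
        rw [Λ.sseg_comp_right hcomp le_self_add hble1, Λ.sseg_comp_right hcomp le_self_add hble2]
        exact hne'

end KGraph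

section Family

variable {k : ℕ} {Λ : KGraph k} {A : Type} [Ring A] (f : KPFamily Λ A)

lemma S_zero {l : Λ.E} (h : Λ.d l = 0) : f.S l = f.P (Λ.r l) := by
  conv_lhs => rw [Λ.eq_ident_of_d_eq_zero l h]
  rw [f.S_ident]

lemma S'_zero {l : Λ.E} (h : Λ.d l = 0) : f.S' l = f.P (Λ.r l) := by
  conv_lhs => rw [Λ.eq_ident_of_d_eq_zero l h]
  rw [f.S'_ident]

lemma PS (l : Λ.E) : f.P (Λ.r l) * f.S l = f.S l := by
  by_cases h : Λ.d l = 0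
  · rw [S_zero f h, f.idem]
  · exact f.P_mul_S l h

lemma SP (l : Λ.E) : f.S l * f.P (Λ.s l) = f.S l := by
  by_cases h : Λ.d l = 0
  · rw [S_zero f h, Λ.s_eq_r_of_d_eq_zero h, f.idem]
  · exact f.S_mul_P l h

lemma PS' (l : Λ.E) : f.P (Λ.s l) * f.S' l = f.S' l := by
  by_cases h : Λ.d l = 0
  · rw [S'_zero f h, Λ.s_eq_r_of_d_eq_zero h, f.idem]
  · exact f.P_mul_S' l h

lemma S'P (l : Λ.E) : f.S' l * f.P (Λ.r l) = f.S' l := by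
  by_cases h : Λ.d l = 0
  · rw [S'_zero f h, f.idem]
  · exact f.S'_mul_P l h

lemma Smul {l m : Λ.E} (h : Λ.s l = Λ.r m) : f.S l * f.S m = f.S (Λ.comp l m) := by
  by_cases hl : Λ.d l = 0
  · have hrm : Λ.r l = Λ.r m := by rw [← Λ.s_eq_r_of_d_eq_zero hl]; exact h
    have hcm : Λ.comp l m = m := by
      rw [Λ.eq_ident_of_d_eq_zero l hl, hrm, Λ.ident_comp]
    rw [hcm, S_zero f hl, hrm, PS]
  by_cases hm : Λ.d m = 0
  · have hcm : Λ.comp l m = l := by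
      rw [Λ.eq_ident_of_d_eq_zero m hm, ← h, Λ.comp_ident]
    rw [hcm, S_zero f hm, ← h, SP]
  exact f.mul_S hl hm h

lemma S'mul {l m : Λ.E} (h : Λ.s l = Λ.r m) : f.S' m * f.S' l = f.S' (Λ.comp l m) := by
  by_cases hl : Λ.d l = 0
  · have hrm : Λ.r l = Λ.r m := by rw [← Λ.s_eq_r_of_d_eq_zero hl]; exact h
    have hcm : Λ.comp l m = m := by
      rw [Λ.eq_ident_of_d_eq_zero l hl, hrm, Λ.ident_comp]
    rw [hcm, S'_zero f hl, hrm, S'P]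
  by_cases hm : Λ.d m = 0
  · have hcm : Λ.comp l m = l := by
      rw [Λ.eq_ident_of_d_eq_zero m hm, ← h, Λ.comp_ident]
    rw [hcm, S'_zero f hm, ← h, PS']
  exact f.mul_S' hl hm h

lemma S'S (l : Λ.E) : f.S' l * f.S l = f.P (Λ.s l) := by
  by_cases h : Λ.d l = 0
  · rw [S_zero f h, S'_zero f h, Λ.s_eq_r_of_d_eq_zero h, f.idem]
  · exact f.KP3_eq l h

lemma S'S_ne {l m : Λ.E} (hd : Λ.d l = Λ.d m) (hne : l ≠ m) : f.S' l * f.S m = 0 := by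
  by_cases h : Λ.d l = 0
  · have hm : Λ.d m = 0 := by rw [← hd]; exact h
    have hr : Λ.r l ≠ Λ.r m := by
      intro hrr
      exact hne (by rw [Λ.eq_ident_of_d_eq_zero l h, Λ.eq_ident_of_d_eq_zero m hm, hrr])
    rw [S'_zero f h, S_zero f hm]
    exact f.orth _ _ hr
  · exact f.KP3_ne l m h hd hne

lemma SS'_orth {l m : Λ.E} (h : Λ.s l ≠ Λ.s m) : f.S l * f.S' m = 0 := by
  rw [← SP f l, ← PS' f m, mul_assoc, ← mul_assoc (f.P (Λ.s l)), f.orth _ _ h,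
    zero_mul, mul_zero]

lemma S'S_orth {l m : Λ.E} (h : Λ.r l ≠ Λ.r m) : f.S' l * f.S m = 0 := by
  rw [← S'P f l, ← PS f m, mul_assoc, ← mul_assoc (f.P (Λ.r l)), f.orth _ _ h,
    zero_mul, mul_zero]

noncomputable def paths (hrf : Λ.RowFinite) (v : Λ.V) (n : Fin k → ℕ) : Finset Λ.E := (hrf v n).toFinset

lemma mem_paths (hrf : Λ.RowFinite) {v : Λ.V} {n : Fin k → ℕ} {l : Λ.E} :
    l ∈ paths hrf v n ↔ Λ.r l = v ∧ Λ.d l = n := (hrf v n).mem_toFinset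

lemma P_expand (hrf : Λ.RowFinite) (v : Λ.V) (n : Fin k → ℕ) :
    f.P v = ∑ l ∈ paths hrf v n, f.S l * f.S' l := by
  by_cases hn : n = 0
  · subst hn
    have hset : paths hrf v 0 = {Λ.ident v} := by
      ext l
      rw [mem_paths, Finset.mem_singleton]
      constructor
      · rintro ⟨h1, h2⟩; rw [Λ.eq_ident_of_d_eq_zero l h2, h1]
      · rintro rfl; exact ⟨Λ.r_ident v, Λ.d_ident v⟩
    rw [hset, Finset.sum_singleton, f.S_ident, f.S'_ident, f.idem]
  · exact f.KP4 v n hn _ (fun l => mem_paths hrf)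

lemma S_expand (hrf : Λ.RowFinite) (α : Λ.E) (n : Fin k → ℕ) :
    f.S α = ∑ η ∈ paths hrf (Λ.s α) n, f.S (Λ.comp α η) * f.S' η := by
  conv_lhs => rw [← SP f α, P_expand f hrf (Λ.s α) n]
  rw [Finset.mul_sum]
  refine Finset.sum_congr rfl fun η hη => ?_
  have hr : Λ.s α = Λ.r η := ((mem_paths hrf).1 hη).1.symm
  rw [← mul_assoc, Smul f hr]

lemma S'_expand (hrf : Λ.RowFinite) (β : Λ.E) (n : Fin k → ℕ) :
    f.S' β = ∑ ζ ∈ paths hrf (Λ.s β) n, f.S ζ * f.S' (Λ.comp β ζ) := by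
  conv_lhs => rw [← PS' f β, P_expand f hrf (Λ.s β) n]
  rw [Finset.sum_mul]
  refine Finset.sum_congr rfl fun ζ hζ => ?_
  have hr : Λ.s β = Λ.r ζ := ((mem_paths hrf).1 hζ).1.symm
  rw [mul_assoc, S'mul f hr]

lemma SS'_expand (hrf : Λ.RowFinite) {μ ν : Λ.E} (hs : Λ.s μ = Λ.s ν) (n : Fin k → ℕ) :
    f.S μ * f.S' ν =
      ∑ η ∈ paths hrf (Λ.s μ) n, f.S (Λ.comp μ η) * f.S' (Λ.comp ν η) := by
  conv_lhs => rw [← PS' f ν, ← hs, P_expand f hrf (Λ.s μ) n, ← mul_assoc]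
  rw [Finset.mul_sum, Finset.sum_mul]
  refine Finset.sum_congr rfl fun η hη => ?_
  have hr : Λ.s μ = Λ.r η := ((mem_paths hrf).1 hη).1.symm
  have hrν : Λ.s ν = Λ.r η := by rw [← hs]; exact hr
  rw [← mul_assoc, Smul f hr, mul_assoc, S'mul f hrν]

open Classical in
noncomputable def mce (hrf : Λ.RowFinite) (β α : Λ.E) : Finset (Λ.E × Λ.E) :=
  ((paths hrf (Λ.s β) (Λ.d β ⊔ Λ.d α - Λ.d β)) ×ˢ
      (paths hrf (Λ.s α) (Λ.d β ⊔ Λ.d α - Λ.d α))).filter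
    (fun q => Λ.comp β q.1 = Λ.comp α q.2)

open Classical in
lemma mem_mce (hrf : Λ.RowFinite) {β α : Λ.E} {q : Λ.E × Λ.E} :
    q ∈ mce hrf β α ↔ (Λ.r q.1 = Λ.s β ∧ Λ.d q.1 = Λ.d β ⊔ Λ.d α - Λ.d β) ∧
      (Λ.r q.2 = Λ.s α ∧ Λ.d q.2 = Λ.d β ⊔ Λ.d α - Λ.d α) ∧
      Λ.comp β q.1 = Λ.comp α q.2 := by
  unfold mce
  rw [Finset.mem_filter, Finset.mem_product, mem_paths hrf, mem_paths hrf]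
  tauto

open Classical in
lemma S'_mul_S (hrf : Λ.RowFinite) (β α : Λ.E) :
    f.S' β * f.S α = ∑ q ∈ mce hrf β α, f.S q.1 * f.S' q.2 := by
  rw [S'_expand f hrf β (Λ.d β ⊔ Λ.d α - Λ.d β),
    S_expand f hrf α (Λ.d β ⊔ Λ.d α - Λ.d α), Finset.sum_mul_sum]
  unfold mce
  rw [Finset.sum_filter, Finset.sum_product]
  refine Finset.sum_congr rfl fun ζ hζ => Finset.sum_congr rfl fun η hη => ?_
  obtain ⟨hrζ, hdζ⟩ := (mem_paths hrf).1 hζ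
  obtain ⟨hrη, hdη⟩ := (mem_paths hrf).1 hη
  have hsβζ : Λ.s β = Λ.r ζ := hrζ.symm
  have hsαη : Λ.s α = Λ.r η := hrη.symm
  have hdc : Λ.d (Λ.comp β ζ) = Λ.d (Λ.comp α η) := by
    rw [Λ.d_comp hsβζ, Λ.d_comp hsαη, hdζ, hdη,
      add_tsub_cancel_of_le le_sup_left, add_tsub_cancel_of_le le_sup_right]
  have hmid : f.S ζ * f.S' (Λ.comp β ζ) * (f.S (Λ.comp α η) * f.S' η) =
      f.S ζ * (f.S' (Λ.comp β ζ) * f.S (Λ.comp α η)) * f.S' η := by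
    rw [mul_assoc, mul_assoc, mul_assoc]
  rw [hmid]
  by_cases heq : Λ.comp β ζ = Λ.comp α η
  · rw [if_pos heq, heq, S'S f]
    have hsc : Λ.s (Λ.comp α η) = Λ.s ζ := by
      rw [← heq, Λ.s_comp hsβζ]
    rw [hsc, SP f]
  · rw [if_neg heq, S'S_ne f hdc heq, mul_zero, zero_mul]

lemma no_ext_zero_left (hrf : Λ.RowFinite) {lam ζ : Λ.E} (hle : Λ.d ζ ≤ Λ.d lam)
    (h : ¬ ∃ β, Λ.s ζ = Λ.r β ∧ Λ.comp ζ β = lam) : f.S' lam * f.S ζ = 0 := by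
  rw [S'_mul_S f hrf]
  refine Finset.sum_eq_zero fun q hq => absurd ?_ h
  obtain ⟨⟨hr1, hd1⟩, ⟨hr2, hd2⟩, hcomp⟩ := (mem_mce hrf).1 hq
  have h0 : Λ.d q.1 = 0 := by rw [hd1, sup_eq_left.2 hle, tsub_self]
  have hq1 : q.1 = Λ.ident (Λ.s lam) := by
    rw [Λ.eq_ident_of_d_eq_zero q.1 h0, hr1]
  have hcl : Λ.comp lam q.1 = lam := by rw [hq1, Λ.comp_ident]
  exact ⟨q.2, hr2.symm, by rw [← hcomp, hcl]⟩

lemma no_ext_zero_right (hrf : Λ.RowFinite) {lam η : Λ.E} (hle : Λ.d η ≤ Λ.d lam)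
    (h : ¬ ∃ β, Λ.s η = Λ.r β ∧ Λ.comp η β = lam) : f.S' η * f.S lam = 0 := by
  rw [S'_mul_S f hrf]
  refine Finset.sum_eq_zero fun q hq => absurd ?_ h
  obtain ⟨⟨hr1, hd1⟩, ⟨hr2, hd2⟩, hcomp⟩ := (mem_mce hrf).1 hq
  have h0 : Λ.d q.2 = 0 := by rw [hd2, sup_eq_right.2 hle, tsub_self]
  have hq2 : q.2 = Λ.ident (Λ.s lam) := by
    rw [Λ.eq_ident_of_d_eq_zero q.2 h0, hr2]
  have hcl : Λ.comp lam q.2 = lam := by rw [hq2, Λ.comp_ident]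
  exact ⟨q.1, hr1.symm, by rw [hcomp, hcl]⟩

lemma S'_comp_S {ζ β : Λ.E} (h : Λ.s ζ = Λ.r β) :
    f.S' (Λ.comp ζ β) * f.S ζ = f.S' β := by
  rw [← S'mul f h, mul_assoc, S'S f, h, S'P f]

lemma S'_S_comp {η β : Λ.E} (h : Λ.s η = Λ.r β) :
    f.S' η * f.S (Λ.comp η β) = f.S β := by
  rw [← Smul f h, ← mul_assoc, S'S f, h, PS f]

lemma kill_one (hrf : Λ.RowFinite) (lam ζ η : Λ.E)
    (hW : ∃ g e : Fin k → ℕ, g + e + Λ.d ζ ≤ Λ.d lam ∧ g + e + Λ.d η ≤ Λ.d lam ∧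
      Λ.sseg lam (g + Λ.d ζ) (g + Λ.d ζ + e) ≠ Λ.sseg lam (g + Λ.d η) (g + Λ.d η + e)) :
    f.S' lam * (f.S ζ * f.S' η) * f.S lam = 0 := by
  obtain ⟨g, e, hb1, hb2, hne⟩ := hW
  have hζle : Λ.d ζ ≤ Λ.d lam := le_trans le_add_self hb1
  have hηle : Λ.d η ≤ Λ.d lam := le_trans le_add_self hb2
  by_cases h1 : ∃ β, Λ.s ζ = Λ.r β ∧ Λ.comp ζ β = lam
  swap
  · rw [← mul_assoc, no_ext_zero_left f hrf hζle h1, zero_mul, zero_mul]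
  by_cases h2 : ∃ β, Λ.s η = Λ.r β ∧ Λ.comp η β = lam
  swap
  · rw [mul_assoc, mul_assoc, no_ext_zero_right f hrf hηle h2, mul_zero, mul_zero]
  obtain ⟨β, hsβ, hcβ⟩ := h1
  obtain ⟨β', hsβ', hcβ'⟩ := h2
  have e1 : f.S' lam * f.S ζ = f.S' β := by rw [← hcβ]; exact S'_comp_S f hsβ
  have e2 : f.S' η * f.S lam = f.S β' := by rw [← hcβ']; exact S'_S_comp f hsβ'
  have emain : f.S' lam * (f.S ζ * f.S' η) * f.S lam = f.S' β * f.S β' := by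
    rw [← mul_assoc, e1, mul_assoc, e2]
  rw [emain, S'_mul_S f hrf]
  refine Finset.sum_eq_zero fun q hq => ?_
  exfalso
  obtain ⟨⟨hr1, hd1⟩, ⟨hr2, hd2⟩, hcomp⟩ := (mem_mce hrf).1 hq
  have hdropβ : Λ.drop lam (Λ.d ζ) = β := Λ.drop_eq hζle rfl hsβ hcβ
  have hdropβ' : Λ.drop lam (Λ.d η) = β' := Λ.drop_eq hηle rfl hsβ' hcβ'
  have key1 : Λ.sseg (Λ.comp β q.1) g (g + e) =
      Λ.sseg lam (Λ.d ζ + g) (Λ.d ζ + g + e) :=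
    Λ.sseg_factor hζle hdropβ hr1.symm hb1
  have key2 : Λ.sseg (Λ.comp β' q.2) g (g + e) =
      Λ.sseg lam (Λ.d η + g) (Λ.d η + g + e) :=
    Λ.sseg_factor hηle hdropβ' hr2.symm hb2
  rw [hcomp, key2] at key1
  apply hne
  have c1 : g + Λ.d ζ = Λ.d ζ + g := add_comm _ _
  have c2 : g + Λ.d η = Λ.d η + g := add_comm _ _
  rw [c1, c2, key1]

lemma kill_all (hrf : Λ.RowFinite) (hap : Λ.Aperiodic) (v : Λ.V) (F : Finset (Λ.E × Λ.E))
    (hF : ∀ q ∈ F, Λ.d q.1 ≠ Λ.d q.2) :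
    ∃ lam : Λ.E, Λ.r lam = v ∧
      ∀ q ∈ F, f.S' lam * (f.S q.1 * f.S' q.2) * f.S lam = 0 := by
  have hL : ∀ md ∈ F.toList.map (fun q => (Λ.d q.1, Λ.d q.2)), md.1 ≠ md.2 := by
    intro md hmd
    obtain ⟨q, hqF, rfl⟩ := List.mem_map.1 hmd
    exact hF q (Finset.mem_toList.1 hqF)
  obtain ⟨μ, hrμ, hwit⟩ := Λ.build hap _ hL v
  refine ⟨μ, hrμ, fun q hq => kill_one f hrf μ q.1 q.2 ?_⟩
  exact hwit (Λ.d q.1, Λ.d q.2)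
    (List.mem_map_of_mem (f := fun q => (Λ.d q.1, Λ.d q.2)) (Finset.mem_toList.2 hq))

end Family

lemma sup_tsub_inj {k : ℕ} {m n : Fin k → ℕ} (h : m ⊔ n - m = m ⊔ n - n) : m = n := by
  funext i
  have hi := congrFun h i
  simp only [Pi.sub_apply, Pi.sup_apply] at hi
  rcases le_total (m i) (n i) with h' | h'
  · rw [sup_eq_right.2 h'] at hi; omega
  · rw [sup_eq_left.2 h'] at hi; omega

set_option synthInstance.maxHeartbeats 1000000 in
set_option maxHeartbeats 2000000 in
lemma mem_of_isInternal {ι A R : Type} [Ring A] [CommRing R] [Algebra R A]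
    [DecidableEq ι] (G : ι → AddSubgroup A) (hint : DirectSum.IsInternal G)
    (V : Submodule R A) (hgr : ∀ n : ι, ∀ x ∈ G n, x ∈ V) (a : A) : a ∈ V := by
  obtain ⟨y, hy⟩ := hint.surjective a
  have key : ∀ z : DirectSum ι (fun n => ↥(G n)),
      (DirectSum.coeAddMonoidHom G) z ∈ V := by
    intro z
    refine DirectSum.induction_on z ?_ ?_ ?_
    · rw [map_zero]; exact V.zero_mem
    · intro i x; rw [DirectSum.coeAddMonoidHom_of]; exact hgr i x.1 x.2
    · intro x y hx hy; rw [map_add]; exact V.add_mem hx hy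
  rw [← hy]; exact key y

set_option maxHeartbeats 1000000 in
/-- **Theorem 4.5 (the Cuntz-Krieger uniqueness theorem).**  Let `Λ` be an
aperiodic row-finite `k`-graph without sources, `R` a commutative ring with
`1`, and `B` a ring.  If `π : KP_R(Λ) → B` is a ring homomorphism such that
`π (c • p_v) ≠ 0` for all `c ∈ R∖{0}` and `v ∈ Λ^0`, then `π` is injective. -/
theorem cuntz_krieger_uniqueness (k : ℕ) (hk : 0 < k) (Λ : KGraph k)
    (hap : Λ.Aperiodic) (hrf : Λ.RowFinite) (hns : Λ.NoSources)
    (R : Type) [CommRing R] (A : Type) [Ring A] [Algebra R A]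
    (KP : KPAlgebra Λ R A)
    (B : Type) [Ring B] (π : A →+* B)
    (hv : ∀ (c : R) (v : Λ.V), c ≠ 0 → π (c • KP.fam.P v) ≠ 0) :
    Function.Injective π := by
  classical
  rw [injective_iff_map_eq_zero]
  intro a ha
  by_contra hane
  set fam := KP.fam with hfam
  -- Step A : a lies in the span of the products s_l s_m^*
  set bigS : Set A := {x : A | ∃ l m : Λ.E, x = fam.S l * fam.S' m} with hbigS
  set V : Submodule R A := Submodule.span R bigS with hV
  have hgr : ∀ n : Fin k → ℤ, ∀ x ∈ KP.grading n, x ∈ V := by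
    intro n x hx
    have hx' : x ∈ (KP.grading n : Set A) := hx
    rw [KP.grading_eq n] at hx'
    refine Submodule.span_mono ?_ hx'
    rintro y ⟨l, m, -, hy⟩
    exact ⟨l, m, hy⟩
  have haV : a ∈ V := mem_of_isInternal KP.grading KP.grading_internal V hgr a
  rw [hV, Submodule.mem_span_set] at haV
  obtain ⟨cf, hcsupp, hcsum⟩ := haV
  have hchoose : ∀ x ∈ cf.support, ∃ l m : Λ.E, x = fam.S l * fam.S' m :=
    fun x hx => hcsupp hx
  choose μf νf hμν using hchoose
  set J := cf.support.attach with hJ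
  have ha' : a = ∑ x ∈ J, cf x.1 • (fam.S (μf x.1 x.2) * fam.S' (νf x.1 x.2)) := by
    rw [← hcsum]
    show (∑ y ∈ cf.support, cf y • y) = _
    rw [← Finset.sum_attach cf.support (fun y => cf y • y)]
    exact Finset.sum_congr rfl fun x _ => by rw [← hμν x.1 x.2]
  set N := J.sup (fun x => Λ.d (μf x.1 x.2)) with hN
  set I := J.filter (fun x => Λ.s (μf x.1 x.2) = Λ.s (νf x.1 x.2)) with hI
  have ha2 : a = ∑ x ∈ I, cf x.1 • (fam.S (μf x.1 x.2) * fam.S' (νf x.1 x.2)) := by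
    rw [ha']
    refine (Finset.sum_subset (Finset.filter_subset _ _) ?_).symm
    intro x hx hnx
    have hss : Λ.s (μf x.1 x.2) ≠ Λ.s (νf x.1 x.2) :=
      fun hcon => hnx (Finset.mem_filter.2 ⟨hx, hcon⟩)
    rw [SS'_orth fam hss, smul_zero]
  set w : (Λ.E × Λ.E) →₀ R :=
    ∑ x ∈ I, ∑ η ∈ paths hrf (Λ.s (μf x.1 x.2)) (N - Λ.d (μf x.1 x.2)),
      Finsupp.single (Λ.comp (μf x.1 x.2) η, Λ.comp (νf x.1 x.2) η) (cf x.1)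
    with hwdef
  have hz0 : ∀ p : Λ.E × Λ.E,
      (fun (p : Λ.E × Λ.E) (c : R) => c • (fam.S p.1 * fam.S' p.2)) p 0 = 0 :=
    fun p => zero_smul R _
  have hadd0 : ∀ (p : Λ.E × Λ.E) (c1 c2 : R),
      (fun (p : Λ.E × Λ.E) (c : R) => c • (fam.S p.1 * fam.S' p.2)) p (c1 + c2) =
        (fun (p : Λ.E × Λ.E) (c : R) => c • (fam.S p.1 * fam.S' p.2)) p c1 +
        (fun (p : Λ.E × Λ.E) (c : R) => c • (fam.S p.1 * fam.S' p.2)) p c2 :=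
    fun p c1 c2 => add_smul c1 c2 _
  have hwa : a = w.sum (fun p c => c • (fam.S p.1 * fam.S' p.2)) := by
    rw [hwdef, ← Finsupp.sum_finset_sum_index hz0 hadd0, ha2]
    refine Finset.sum_congr rfl fun x hx => ?_
    rw [← Finsupp.sum_finset_sum_index hz0 hadd0]
    have hsc : Λ.s (μf x.1 x.2) = Λ.s (νf x.1 x.2) := (Finset.mem_filter.1 hx).2
    rw [SS'_expand fam hrf hsc (N - Λ.d (μf x.1 x.2)), Finset.smul_sum]
    refine Finset.sum_congr rfl fun η hη => ?_
    rw [Finsupp.sum_single_index (hz0 _)]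
  have hwa2 : a = ∑ p ∈ w.support, w p • (fam.S p.1 * fam.S' p.2) := hwa
  have hshape : ∀ p ∈ w.support, Λ.d p.1 = N ∧ Λ.s p.1 = Λ.s p.2 := by
    intro p hp
    rw [hwdef] at hp
    obtain ⟨x, hxI, hp2⟩ := Finset.mem_biUnion.1 (Finsupp.support_finset_sum hp)
    obtain ⟨η, hη, hp3⟩ := Finset.mem_biUnion.1 (Finsupp.support_finset_sum hp2)
    have hp4 : p = (Λ.comp (μf x.1 x.2) η, Λ.comp (νf x.1 x.2) η) :=
      Finset.mem_singleton.1 (Finsupp.support_single_subset hp3)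
    obtain ⟨hrη, hdη⟩ := (mem_paths hrf).1 hη
    have hsμν : Λ.s (μf x.1 x.2) = Λ.s (νf x.1 x.2) := (Finset.mem_filter.1 hxI).2
    have hcμ : Λ.s (μf x.1 x.2) = Λ.r η := hrη.symm
    have hcν : Λ.s (νf x.1 x.2) = Λ.r η := by rw [← hsμν]; exact hcμ
    have hxJ : x ∈ J := Finset.mem_attach _ x
    constructor
    · rw [hp4]
      show Λ.d (Λ.comp (μf x.1 x.2) η) = N
      rw [Λ.d_comp hcμ, hdη,
        add_tsub_cancel_of_le (Finset.le_sup (f := fun x => Λ.d (μf x.1 x.2)) hxJ)]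
    · rw [hp4]
      show Λ.s (Λ.comp (μf x.1 x.2) η) = Λ.s (Λ.comp (νf x.1 x.2) η)
      rw [Λ.s_comp hcμ, Λ.s_comp hcν]
  have hw0 : w ≠ 0 := by
    intro h0
    apply hane
    rw [hwa, h0, Finsupp.sum_zero_index]
  obtain ⟨p0, hp0⟩ := Finsupp.support_nonempty_iff.2 hw0
  have hc0 : w p0 ≠ 0 := Finsupp.mem_support_iff.1 hp0
  obtain ⟨hd0, hs0⟩ := hshape p0 hp0
  set b := fam.S' p0.1 * a * fam.S p0.2 with hbdef
  have hb : b = ∑ p ∈ w.support,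
      w p • (fam.S' p0.1 * (fam.S p.1 * fam.S' p.2) * fam.S p0.2) := by
    rw [hbdef, hwa2, Finset.mul_sum, Finset.sum_mul]
    refine Finset.sum_congr rfl fun p hp => ?_
    rw [mul_smul_comm, smul_mul_assoc]
  have hb2 : b = ∑ p ∈ w.support,
      (if p.1 = p0.1 then w p • (fam.S' p.2 * fam.S p0.2) else 0) := by
    rw [hb]
    refine Finset.sum_congr rfl fun p hp => ?_
    obtain ⟨hdp, hsp⟩ := hshape p hp
    by_cases h : p.1 = p0.1
    · rw [if_pos h, ← h]
      have hmid : fam.S' p.1 * (fam.S p.1 * fam.S' p.2) = fam.S' p.2 := by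
        rw [← mul_assoc, S'S fam, hsp, PS' fam]
      rw [hmid]
    · rw [if_neg h]
      have h0 : fam.S' p0.1 * fam.S p.1 = 0 :=
        S'S_ne fam (by rw [hd0, hdp]) (fun hh => h hh.symm)
      rw [← mul_assoc, h0, zero_mul, zero_mul, smul_zero]
  set Bad := (w.support.filter
      (fun p => p.1 = p0.1 ∧ Λ.d p.2 ≠ Λ.d p0.2)).biUnion
    (fun p => mce hrf p.2 p0.2) with hBad
  have hBadne : ∀ q ∈ Bad, Λ.d q.1 ≠ Λ.d q.2 := by
    intro q hq
    obtain ⟨p, hpB, hqm⟩ := Finset.mem_biUnion.1 hq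
    obtain ⟨⟨-, hdq1⟩, ⟨-, hdq2⟩, -⟩ := (mem_mce hrf).1 hqm
    obtain ⟨hps, hp1, hpd⟩ := Finset.mem_filter.1 hpB
    intro hcon
    exact hpd (sup_tsub_inj (by rw [← hdq1, ← hdq2, hcon]))
  obtain ⟨lam, hrlam, hkill⟩ := kill_all fam hrf hap (Λ.s p0.2) Bad hBadne
  have E1 : fam.S' lam * b * fam.S lam = w p0 • fam.P (Λ.s lam) := by
    rw [hb2, Finset.mul_sum, Finset.sum_mul]
    have hterm : ∀ p ∈ w.support,
        fam.S' lam * (if p.1 = p0.1 then w p • (fam.S' p.2 * fam.S p0.2) else 0) *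
          fam.S lam = (if p = p0 then w p0 • fam.P (Λ.s lam) else 0) := by
      intro p hp
      obtain ⟨hdp, hsp⟩ := hshape p hp
      by_cases h1 : p.1 = p0.1
      · rw [if_pos h1]
        by_cases h2 : p.2 = p0.2
        · have hpp0 : p = p0 := Prod.ext h1 h2
          rw [if_pos hpp0, hpp0, mul_smul_comm, smul_mul_assoc]
          congr 1
          rw [S'S fam, ← hrlam, S'P fam, S'S fam]
        · rw [if_neg (fun hh : p = p0 => h2 (by rw [hh]))]
          by_cases h3 : Λ.d p.2 = Λ.d p0.2
          · rw [S'S_ne fam h3 h2, smul_zero, mul_zero, zero_mul]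
          · rw [S'_mul_S fam hrf p.2 p0.2, mul_smul_comm, smul_mul_assoc,
              Finset.mul_sum, Finset.sum_mul]
            have hzz : ∀ q ∈ mce hrf p.2 p0.2,
                fam.S' lam * (fam.S q.1 * fam.S' q.2) * fam.S lam = 0 := by
              intro q hq
              refine hkill q (Finset.mem_biUnion.2 ⟨p, ?_, hq⟩)
              exact Finset.mem_filter.2 ⟨hp, h1, h3⟩
            rw [Finset.sum_eq_zero hzz, smul_zero]
      · rw [if_neg h1, if_neg (fun hh : p = p0 => h1 (by rw [hh])), mul_zero,
          zero_mul]
    rw [Finset.sum_congr rfl hterm, Finset.sum_ite_eq' w.support p0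
      (fun _ => w p0 • fam.P (Λ.s lam)), if_pos hp0]
  have hπ : π (w p0 • fam.P (Λ.s lam)) = 0 := by
    rw [← E1, hbdef]
    simp only [map_mul, ha, mul_zero, zero_mul]
  exact hv (w p0) (Λ.s lam) hc0 hπ

end KP
end
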